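/- arXiv:0905.3348 — 7 statements merged into one kernel-verified Lean document; each statement's English description precedes it below -/
import Mathlib

section
/- Let v = [q; w_1,...,w_n] be a WVG and let v' be obtained from v by splitting player i of weight w_i into two players i' and i'' with positive weights w_{i'} + w_{i''} = w_i. Then η_{i'}(v') + η_{i''}(v') = 2·η_i(v). -/
open scoped Classical

section WVG

variable {α : Type*} [Fintype α] [DecidableEq α]

/-- A coalition `S` is winning in the WVG with quota `q` and weights `w`
iff its total weight is at least the quota. -/
def winning (q : ℕ) (w : α → ℕ) (S : Finset α) : Prop :=
  q ≤ ∑ j ∈ S, w j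

/-- `eta q w i` is the number of coalitions containing `i` that are winning
and become losing when `i` is removed (the raw Banzhaf count of `i`). -/
noncomputable def eta (q : ℕ) (w : α → ℕ) (i : α) : ℕ :=
  (Finset.univ.filter fun S : Finset α =>
    i ∈ S ∧ winning q w S ∧ ¬ winning q w (S.erase i)).card

/-- Total raw Banzhaf count over all players. -/
noncomputable def totalEta (q : ℕ) (w : α → ℕ) : ℕ :=
  ∑ i, eta q w i

/-- Banzhaf index of player `i`. -/
noncomputable def banzhaf (q : ℕ) (w : α → ℕ) (i : α) : ℚ :=
  (eta q w i : ℚ) / (totalEta q w : ℚ)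

/-- Shapley-Shubik index of player `i`. -/
noncomputable def shapley (q : ℕ) (w : α → ℕ) (i : α) : ℚ :=
  ∑ S ∈ (Finset.univ.filter fun S : Finset α =>
      i ∈ S ∧ winning q w S ∧ ¬ winning q w (S.erase i)),
    ((S.card - 1).factorial * (Fintype.card α - S.card).factorial : ℚ) /
      ((Fintype.card α).factorial : ℚ)

end WVG

section Aux

open Finset

/-- The raw Banzhaf count of `i`, expressed as a count over subsets of the
other players. -/
lemma eta_eq_card_subtype {α : Type*} [Fintype α] [DecidableEq α]
    (q : ℕ) (w : α → ℕ) (i : α) :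
    eta q w i = (Finset.univ.filter fun T : Finset {x : α // x ≠ i} =>
      q ≤ (∑ x ∈ T, w x.1) + w i ∧ (∑ x ∈ T, w x.1) < q).card := by
  classical
  unfold eta winning
  apply Finset.card_nbij' (fun S => (S.erase i).subtype (· ≠ i))
    (fun T => insert i (T.map (Function.Embedding.subtype fun x => x ≠ i)))
  · intro S hS
    simp only [Finset.mem_coe, mem_filter, mem_univ, true_and] at hS ⊢
    obtain ⟨hi, hwin, hlose⟩ := hS
    have hsum : (∑ x ∈ (S.erase i).subtype (· ≠ i), w x.1) = ∑ x ∈ S.erase i, w x := by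
      rw [Finset.sum_subtype_eq_sum_filter]
      congr 1
      rw [Finset.filter_ne', Finset.erase_idem]
    have hadd : (∑ x ∈ S.erase i, w x) + w i = ∑ x ∈ S, w x :=
      Finset.sum_erase_add S w hi
    constructor
    · rw [hsum, hadd]; exact hwin
    · rw [hsum]; exact lt_of_not_ge hlose
  · intro T hT
    simp only [Finset.mem_coe, mem_filter, mem_univ, true_and] at hT ⊢
    have hnotmem : i ∉ T.map (Function.Embedding.subtype fun x => x ≠ i) := by
      simp
    have hsum : ∑ x ∈ T.map (Function.Embedding.subtype fun x => x ≠ i), w x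
        = ∑ x ∈ T, w x.1 := Finset.sum_map _ _ _
    refine ⟨Finset.mem_insert_self _ _, ?_, ?_⟩
    · rw [Finset.sum_insert hnotmem, hsum]
      omega
    · rw [Finset.erase_insert hnotmem, hsum]
      omega
  · intro S hS
    simp only [Finset.mem_coe, mem_filter, mem_univ, true_and] at hS
    beta_reduce
    rw [Finset.subtype_map_of_mem (fun x hx => (Finset.mem_erase.1 hx).1),
      Finset.insert_erase hS.1]
  · intro T hT
    have hnotmem : i ∉ T.map (Function.Embedding.subtype fun x => x ≠ i) := by
      simp
    beta_reduce
    rw [Finset.erase_insert hnotmem]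
    ext b
    simp only [Finset.mem_subtype, Finset.mem_map, Function.Embedding.coe_subtype]
    constructor
    · rintro ⟨x, hx, hxb⟩; rwa [Subtype.ext hxb] at hx
    · intro hb; exact ⟨b, hb, rfl⟩

lemma erase_disjSum_inr {β γ' : Type*} [DecidableEq β] [DecidableEq γ']
    (u : Finset β) (v : Finset γ') (j : γ') :
    (u.disjSum v).erase (Sum.inr j) = u.disjSum (v.erase j) := by
  ext (x | x) <;> simp

/-- Counting pivotal coalitions of a right-hand player whose right part is a
fixed set `K`. -/
lemma count_fixed_right {β : Type*} [Fintype β] [DecidableEq β]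
    (q : ℕ) (w' : β ⊕ Fin 2 → ℕ) (j : Fin 2) (K : Finset (Fin 2)) (hj : j ∈ K) :
    (Finset.univ.filter fun S : Finset (β ⊕ Fin 2) =>
        S.toRight = K ∧ Sum.inr j ∈ S ∧ winning q w' S ∧
          ¬ winning q w' (S.erase (Sum.inr j))).card
    = (Finset.univ.filter fun T : Finset β =>
        q ≤ (∑ x ∈ T, w' (Sum.inl x)) + ∑ k ∈ K, w' (Sum.inr k)
          ∧ (∑ x ∈ T, w' (Sum.inl x)) + ∑ k ∈ K.erase j, w' (Sum.inr k) < q).card := by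
  classical
  unfold winning
  apply Finset.card_nbij' Finset.toLeft (fun T => T.disjSum K)
  · intro S hS
    simp only [Finset.mem_coe, mem_filter, mem_univ, true_and] at hS ⊢
    obtain ⟨hK, hmem, hwin, hlose⟩ := hS
    have hS' : S = S.toLeft.disjSum K := by rw [← hK, Finset.toLeft_disjSum_toRight]
    rw [hS', Finset.sum_disjSum] at hwin
    rw [hS', erase_disjSum_inr, Finset.sum_disjSum] at hlose
    exact ⟨hwin, lt_of_not_ge hlose⟩
  · intro T hT
    simp only [Finset.mem_coe, mem_filter, mem_univ, true_and] at hT ⊢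
    refine ⟨Finset.toRight_disjSum, ?_, ?_, ?_⟩
    · simp [hj]
    · rw [Finset.sum_disjSum]; exact hT.1
    · rw [erase_disjSum_inr, Finset.sum_disjSum]
      omega
  · intro S hS
    simp only [Finset.mem_coe, mem_filter, mem_univ, true_and] at hS
    beta_reduce
    rw [← hS.1, Finset.toLeft_disjSum_toRight]
  · intro T _
    exact Finset.toLeft_disjSum

lemma fin2_mem_cases : ∀ (j : Fin 2) (K : Finset (Fin 2)), j ∈ K →
    K = {j} ∨ K = Finset.univ := by decide

lemma fin2_singleton_ne_univ : ∀ j : Fin 2, ({j} : Finset (Fin 2)) ≠ Finset.univ := by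
  decide

/-- Decompose the pivotal count of a right-hand player according to whether the
other right-hand player is present. -/
lemma eta_inr_decomp {β : Type*} [Fintype β] [DecidableEq β]
    (q : ℕ) (w' : β ⊕ Fin 2 → ℕ) (j : Fin 2) :
    eta q w' (Sum.inr j)
      = (Finset.univ.filter fun S : Finset (β ⊕ Fin 2) =>
          S.toRight = {j} ∧ Sum.inr j ∈ S ∧ winning q w' S ∧
            ¬ winning q w' (S.erase (Sum.inr j))).card
      + (Finset.univ.filter fun S : Finset (β ⊕ Fin 2) =>
          S.toRight = Finset.univ ∧ Sum.inr j ∈ S ∧ winning q w' S ∧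
            ¬ winning q w' (S.erase (Sum.inr j))).card := by
  classical
  unfold eta
  rw [← Finset.card_union_of_disjoint, ← Finset.filter_or]
  · apply congrArg
    apply Finset.filter_congr
    intro S _
    constructor
    · intro hC
      have hjK : j ∈ S.toRight := Finset.mem_toRight.2 hC.1
      rcases fin2_mem_cases j S.toRight hjK with h | h
      · exact Or.inl ⟨h, hC⟩
      · exact Or.inr ⟨h, hC⟩
    · rintro (⟨_, hC⟩ | ⟨_, hC⟩) <;> exact hC
  · rw [Finset.disjoint_left]
    intro S hS hS'
    simp only [Finset.mem_filter] at hS hS'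
    exact fin2_singleton_ne_univ j (hS.2.1 ▸ hS'.2.1)

/-- The key interval-splitting identity on counts. -/
lemma pair_card {β : Type*} [Fintype β] [DecidableEq β]
    (q c d : ℕ) (f : β → ℕ) :
    (Finset.univ.filter fun T : Finset β =>
        q ≤ (∑ x ∈ T, f x) + (c + d) ∧ (∑ x ∈ T, f x) + d < q).card
    + (Finset.univ.filter fun T : Finset β =>
        q ≤ (∑ x ∈ T, f x) + d ∧ (∑ x ∈ T, f x) < q).card
    = (Finset.univ.filter fun T : Finset β =>
        q ≤ (∑ x ∈ T, f x) + (c + d) ∧ (∑ x ∈ T, f x) < q).card := by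
  classical
  rw [← Finset.card_union_of_disjoint, ← Finset.filter_or]
  · apply congrArg
    apply Finset.filter_congr
    intro T _
    omega
  · rw [Finset.disjoint_left]
    intro T hT hT'
    simp only [Finset.mem_filter] at hT hT'
    omega

end Aux

/-- If player `i` of weight `w i` splits into two players of positive weights
`a` and `b` with `a + b = w i`, the raw Banzhaf counts of the two sub-players
sum to twice the raw Banzhaf count of `i`. -/
theorem split_eta_doubles
    (α : Type*) [Fintype α] [DecidableEq α]
    (q : ℕ) (w : α → ℕ) (i : α) (a b : ℕ) (ha : 0 < a) (hb : 0 < b)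
    (hab : a + b = w i)
    (w' : {x : α // x ≠ i} ⊕ Fin 2 → ℕ)
    (hw' : w' = Sum.elim (fun x : {x : α // x ≠ i} => w x.1) ![a, b]) :
    eta q w' (Sum.inr 0) + eta q w' (Sum.inr 1) = 2 * eta q w i := by
  classical
  subst hw'
  set β := {x : α // x ≠ i}
  set w' : β ⊕ Fin 2 → ℕ := Sum.elim (fun x : β => w x.1) ![a, b] with hw'
  have h0 : w' (Sum.inr 0) = a := rfl
  have h1 : w' (Sum.inr 1) = b := rfl
  have hl : ∀ x : β, w' (Sum.inl x) = w x.1 := fun _ => rfl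
  -- the four counts
  have e0 := eta_inr_decomp q w' 0
  have e1 := eta_inr_decomp q w' 1
  rw [count_fixed_right q w' 0 {0} (by decide),
      count_fixed_right q w' 0 Finset.univ (by decide)] at e0
  rw [count_fixed_right q w' 1 {1} (by decide),
      count_fixed_right q w' 1 Finset.univ (by decide)] at e1
  -- simplify the Fin 2 sums
  have hs0 : ∑ k ∈ ({0} : Finset (Fin 2)), w' (Sum.inr k) = a := by simp [h0]
  have hs1 : ∑ k ∈ ({1} : Finset (Fin 2)), w' (Sum.inr k) = b := by simp [h1]
  have hsu : ∑ k ∈ (Finset.univ : Finset (Fin 2)), w' (Sum.inr k) = a + b := by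
    rw [Fin.sum_univ_two, h0, h1]
  have he00 : (({0} : Finset (Fin 2)).erase 0) = ∅ := by decide
  have he11 : (({1} : Finset (Fin 2)).erase 1) = ∅ := by decide
  have heu0 : ((Finset.univ : Finset (Fin 2)).erase 0) = {1} := by decide
  have heu1 : ((Finset.univ : Finset (Fin 2)).erase 1) = {0} := by decide
  rw [hs0, he00, hsu, heu0] at e0
  rw [hs1, he11, hsu, heu1] at e1
  rw [hs1] at e0
  rw [hs0] at e1
  simp only [Finset.sum_empty, Nat.add_zero] at e0 e1
  -- canonical form for each filter, as predicates over `F T = ∑ x ∈ T, w x.1`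
  have key : eta q w' (Sum.inr 0) + eta q w' (Sum.inr 1)
      = ((Finset.univ.filter fun T : Finset β =>
            q ≤ (∑ x ∈ T, w' (Sum.inl x)) + (a + b) ∧ (∑ x ∈ T, w' (Sum.inl x)) + b < q).card
        + (Finset.univ.filter fun T : Finset β =>
            q ≤ (∑ x ∈ T, w' (Sum.inl x)) + b ∧ (∑ x ∈ T, w' (Sum.inl x)) < q).card)
        + ((Finset.univ.filter fun T : Finset β =>
            q ≤ (∑ x ∈ T, w' (Sum.inl x)) + (b + a) ∧ (∑ x ∈ T, w' (Sum.inl x)) + a < q).card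
        + (Finset.univ.filter fun T : Finset β =>
            q ≤ (∑ x ∈ T, w' (Sum.inl x)) + a ∧ (∑ x ∈ T, w' (Sum.inl x)) < q).card) := by
    rw [e0, e1]
    have c1 : (Finset.univ.filter fun T : Finset β =>
          q ≤ (∑ x ∈ T, w' (Sum.inl x)) + (a + b) ∧ (∑ x ∈ T, w' (Sum.inl x)) + b < q)
        = (Finset.univ.filter fun T : Finset β =>
          q ≤ (∑ x ∈ T, w' (Sum.inl x)) + (a + b) ∧ (∑ x ∈ T, w' (Sum.inl x)) + b < q) := rfl
    have c2 : (Finset.univ.filter fun T : Finset β =>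
          q ≤ (∑ x ∈ T, w' (Sum.inl x)) + (a + b) ∧ (∑ x ∈ T, w' (Sum.inl x)) + a < q)
        = (Finset.univ.filter fun T : Finset β =>
          q ≤ (∑ x ∈ T, w' (Sum.inl x)) + (b + a) ∧ (∑ x ∈ T, w' (Sum.inl x)) + a < q) := by
      apply Finset.filter_congr; intro T _; omega
    rw [c2]
    have hr : ∀ x y z u : ℕ, x + y + (z + u) = y + z + (u + x) := by intros; ring
    convert hr _ _ _ _ <;> exact (Finset.filter_congr_decidable _ _ _).symm
  rw [key, pair_card q a b (fun x => w' (Sum.inl x)),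
      pair_card q b a (fun x => w' (Sum.inl x))]
  have cfin : (Finset.univ.filter fun T : Finset β =>
        q ≤ (∑ x ∈ T, w' (Sum.inl x)) + (a + b) ∧ (∑ x ∈ T, w' (Sum.inl x)) < q)
      = (Finset.univ.filter fun T : Finset β =>
        q ≤ (∑ x ∈ T, w x.1) + w i ∧ (∑ x ∈ T, w x.1) < q) := by
    apply Finset.filter_congr
    intro T _
    simp only [hl]
    omega
  have cfin' : (Finset.univ.filter fun T : Finset β =>
        q ≤ (∑ x ∈ T, w' (Sum.inl x)) + (b + a) ∧ (∑ x ∈ T, w' (Sum.inl x)) < q)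
      = (Finset.univ.filter fun T : Finset β =>
        q ≤ (∑ x ∈ T, w x.1) + w i ∧ (∑ x ∈ T, w x.1) < q) := by
    apply Finset.filter_congr
    intro T _
    simp only [hl]
    omega
  rw [cfin, cfin', ← eta_eq_card_subtype q w i]
  ring
end

section
/- Let v = [q; w_1,...,w_n] be a WVG and v' be obtained by splitting player i into two players i' and i'' with positive weights summing to w_i. Then for every player x ≠ i, η_x(v) ≤ η_x(v'). -/
open scoped Classical

/-- If player `i` splits into two players of positive weights summing to `w i`,
the raw Banzhaf count of every other player does not decrease. -/
theorem split_eta_others_mono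
    (α : Type*) [Fintype α] [DecidableEq α]
    (q : ℕ) (w : α → ℕ) (i : α) (a b : ℕ) (ha : 0 < a) (hb : 0 < b)
    (hab : a + b = w i)
    (w' : {x : α // x ≠ i} ⊕ Fin 2 → ℕ)
    (hw' : w' = Sum.elim (fun x : {x : α // x ≠ i} => w x.1) ![a, b]) :
    ∀ (x : α) (hx : x ≠ i), eta q w x ≤ eta q w' (Sum.inl ⟨x, hx⟩) := by
  intro x hx
  set f : Finset α → Finset ({x : α // x ≠ i} ⊕ Fin 2) := fun S =>
    (S.subtype (· ≠ i)).disjSum (if i ∈ S then Finset.univ else ∅) with hf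
  have hsum : ∀ S : Finset α, ∑ z ∈ f S, w' z = ∑ j ∈ S, w j := by
    intro S
    rw [hf, hw', Finset.sum_disjSum]
    have h1 : ∑ y ∈ S.subtype (· ≠ i), (Sum.elim (fun x : {x : α // x ≠ i} => w x.1)
        ![a, b]) (Sum.inl y) = ∑ j ∈ S.filter (· ≠ i), w j := by
      simp [Finset.sum_subtype_eq_sum_filter]
    have h2 : (∑ j ∈ (if i ∈ S then (Finset.univ : Finset (Fin 2)) else ∅),
        (Sum.elim (fun x : {x : α // x ≠ i} => w x.1) ![a, b]) (Sum.inr j))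
        = if i ∈ S then w i else 0 := by
      split <;> simp [Fin.sum_univ_two, hab]
    rw [h1, h2]
    by_cases hi : i ∈ S
    · rw [if_pos hi, Finset.filter_ne']
      exact Finset.sum_erase_add S w hi
    · rw [if_neg hi, Finset.filter_ne', Finset.erase_eq_of_notMem hi, Nat.add_zero]
  have hmem : ∀ S : Finset α, (Sum.inl ⟨x, hx⟩ : {x : α // x ≠ i} ⊕ Fin 2) ∈ f S ↔ x ∈ S := by
    intro S; simp [hf]
  have herase : ∀ S : Finset α,
      (f S).erase (Sum.inl ⟨x, hx⟩) = f (S.erase x) := by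
    intro S
    ext z
    rcases z with y | j
    · simp only [hf, Finset.mem_erase, Finset.inl_mem_disjSum, Finset.mem_subtype,
        Sum.inl.injEq, Ne, Subtype.ext_iff]
    · simp [hf, Finset.inr_mem_disjSum, Finset.mem_erase, Ne.symm hx]
  apply Finset.card_le_card_of_injOn f
  · intro S hS
    simp only [Finset.mem_coe, Finset.mem_filter, Finset.mem_univ, true_and] at hS ⊢
    obtain ⟨hxS, hwin, hlose⟩ := hS
    refine ⟨(hmem S).2 hxS, ?_, ?_⟩
    · unfold winning at hwin ⊢; rw [hsum]; exact hwin
    · unfold winning at hlose ⊢; rw [herase, hsum]; exact hlose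
  · intro S _ T _ hST
    ext y
    by_cases hy : y = i
    · rw [hy]
      have h0 : (Sum.inr 0 : {x : α // x ≠ i} ⊕ Fin 2) ∈ f S ↔
          (Sum.inr 0 : {x : α // x ≠ i} ⊕ Fin 2) ∈ f T := by rw [hST]
      simpa [hf, Finset.inr_mem_disjSum,
        apply_ite (fun s : Finset (Fin 2) => (0 : Fin 2) ∈ s)] using h0
    · have h1 : (Sum.inl ⟨y, hy⟩ : {x : α // x ≠ i} ⊕ Fin 2) ∈ f S ↔
          (Sum.inl ⟨y, hy⟩ : {x : α // x ≠ i} ⊕ Fin 2) ∈ f T := by rw [hST]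
      simpa [hf, Finset.inl_mem_disjSum] using h1
end

section
/- Let v = [q; w_1,...,w_n] be a WVG and v' be the game obtained by splitting player i into two players i' and i'' with positive weights summing to w_i. Then β_{i'}(v') + β_{i''}(v') ≤ 2·β_i(v). -/
open scoped Classical

namespace SplitAux

open Finset Sum

variable {α : Type*} [Fintype α] [DecidableEq α] {q : ℕ} {w : α → ℕ} {i : α}

/-- weight of a coalition of non-`i` players -/
def WW (w : α → ℕ) (i : α) (T : Finset {x : α // x ≠ i}) : ℕ :=
  ∑ x ∈ T, w x.1

lemma erase_inr_eq (S : Finset ({x : α // x ≠ i} ⊕ Fin 2)) (r : Fin 2) :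
    S.erase (inr r) = S.toLeft.disjSum (S.toRight.erase r) := by
  ext x; cases x <;> simp

lemma sum_velim (g : Fin 2 → ℕ) (S : Finset ({x : α // x ≠ i} ⊕ Fin 2)) :
    ∑ j ∈ S, Sum.elim (fun x : {x : α // x ≠ i} => w x.1) g j
      = WW w i S.toLeft + ∑ e ∈ S.toRight, g e := by
  conv_lhs => rw [← Finset.toLeft_disjSum_toRight (u := S)]
  rw [Finset.sum_sumElim]; rfl

lemma toRight_eq_singleton {S : Finset ({x : α // x ≠ i} ⊕ Fin 2)} {r s : Fin 2}
    (hrs : r ≠ s) (hall : ∀ e : Fin 2, e = r ∨ e = s)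
    (hr : inr r ∈ S) (hs : inr s ∉ S) : S.toRight = {r} := by
  ext e
  rcases hall e with h | h <;> subst h <;>
    simp [Finset.mem_toRight, hr, hs, hrs, Ne.symm hrs]

lemma toRight_eq_pair {S : Finset ({x : α // x ≠ i} ⊕ Fin 2)} {r s : Fin 2}
    (hall : ∀ e : Fin 2, e = r ∨ e = s)
    (hr : inr r ∈ S) (hs : inr s ∈ S) : S.toRight = {r, s} := by
  ext e
  rcases hall e with h | h <;> subst h <;>
    simp [Finset.mem_toRight, hr, hs]

set_option maxHeartbeats 1000000 in
lemma eta_inr (g : Fin 2 → ℕ) (r s : Fin 2) (hrs : r ≠ s)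
    (hall : ∀ e : Fin 2, e = r ∨ e = s) :
    eta q (Sum.elim (fun x : {x : α // x ≠ i} => w x.1) g) (inr r)
      = (Finset.univ.filter fun T : Finset {x : α // x ≠ i} =>
          WW w i T < q ∧ q ≤ WW w i T + g r).card
        + (Finset.univ.filter fun T : Finset {x : α // x ≠ i} =>
          WW w i T + g s < q ∧ q ≤ WW w i T + g s + g r).card := by
  set v := Sum.elim (fun x : {x : α // x ≠ i} => w x.1) g with hv
  have h1 : (Finset.univ.filter fun S : Finset ({x : α // x ≠ i} ⊕ Fin 2) =>
      (inr r ∈ S ∧ winning q v S ∧ ¬ winning q v (S.erase (inr r))) ∧ ¬ inr s ∈ S).card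
      = (Finset.univ.filter fun T : Finset {x : α // x ≠ i} =>
          WW w i T < q ∧ q ≤ WW w i T + g r).card := by
    refine Finset.card_bij' (fun S _ => S.toLeft) (fun T _ => T.disjSum {r}) ?_ ?_ ?_ ?_
    · intro S hS
      simp only [Finset.mem_filter, Finset.mem_univ, true_and] at hS ⊢
      obtain ⟨⟨hrS, hwin, hlose⟩, hsS⟩ := hS
      have hTR : S.toRight = {r} := toRight_eq_singleton hrs hall hrS hsS
      have e1 : ∑ j ∈ S, v j = WW w i S.toLeft + g r := by
        rw [hv, sum_velim, hTR, Finset.sum_singleton]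
      have e2 : ∑ j ∈ S.erase (inr r), v j = WW w i S.toLeft := by
        rw [hv, sum_velim, erase_inr_eq, Finset.toLeft_disjSum, Finset.toRight_disjSum,
          hTR, Finset.erase_singleton, Finset.sum_empty, add_zero]
      unfold winning at hwin hlose
      rw [e1] at hwin; rw [e2] at hlose
      exact ⟨by omega, hwin⟩
    · intro T hT
      simp only [Finset.mem_filter, Finset.mem_univ, true_and] at hT ⊢
      have e1 : ∑ j ∈ T.disjSum {r}, v j = WW w i T + g r := by
        rw [hv, sum_velim, Finset.toLeft_disjSum, Finset.toRight_disjSum, Finset.sum_singleton]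
      have e2 : ∑ j ∈ (T.disjSum {r}).erase (inr r), v j = WW w i T := by
        rw [hv, sum_velim, erase_inr_eq, Finset.toLeft_disjSum, Finset.toRight_disjSum,
          Finset.toLeft_disjSum, Finset.toRight_disjSum, Finset.erase_singleton,
          Finset.sum_empty, add_zero]
      refine ⟨⟨by simp, ?_, ?_⟩, by simp [Ne.symm hrs]⟩
      · unfold winning; rw [e1]; exact hT.2
      · unfold winning; rw [e2]; omega
    · intro S hS
      simp only [Finset.mem_filter, Finset.mem_univ, true_and] at hS
      obtain ⟨⟨hrS, _, _⟩, hsS⟩ := hS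
      show S.toLeft.disjSum {r} = S
      rw [← toRight_eq_singleton hrs hall hrS hsS, Finset.toLeft_disjSum_toRight]
    · intro T _; exact Finset.toLeft_disjSum ..
  have h2 : (Finset.univ.filter fun S : Finset ({x : α // x ≠ i} ⊕ Fin 2) =>
      (inr r ∈ S ∧ winning q v S ∧ ¬ winning q v (S.erase (inr r))) ∧ inr s ∈ S).card
      = (Finset.univ.filter fun T : Finset {x : α // x ≠ i} =>
          WW w i T + g s < q ∧ q ≤ WW w i T + g s + g r).card := by
    have hrns : r ∉ ({s} : Finset (Fin 2)) := by simp [hrs]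
    refine Finset.card_bij' (fun S _ => S.toLeft) (fun T _ => T.disjSum {r, s}) ?_ ?_ ?_ ?_
    · intro S hS
      simp only [Finset.mem_filter, Finset.mem_univ, true_and] at hS ⊢
      obtain ⟨⟨hrS, hwin, hlose⟩, hsS⟩ := hS
      have hTR : S.toRight = {r, s} := toRight_eq_pair hall hrS hsS
      have e1 : ∑ j ∈ S, v j = WW w i S.toLeft + (g r + g s) := by
        rw [hv, sum_velim, hTR, Finset.sum_insert hrns, Finset.sum_singleton]
      have e2 : ∑ j ∈ S.erase (inr r), v j = WW w i S.toLeft + g s := by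
        rw [hv, sum_velim, erase_inr_eq, Finset.toLeft_disjSum, Finset.toRight_disjSum,
          hTR, Finset.erase_insert hrns, Finset.sum_singleton]
      unfold winning at hwin hlose
      rw [e1] at hwin; rw [e2] at hlose
      exact ⟨by omega, by omega⟩
    · intro T hT
      simp only [Finset.mem_filter, Finset.mem_univ, true_and] at hT ⊢
      have e1 : ∑ j ∈ T.disjSum {r, s}, v j = WW w i T + (g r + g s) := by
        rw [hv, sum_velim, Finset.toLeft_disjSum, Finset.toRight_disjSum,
          Finset.sum_insert hrns, Finset.sum_singleton]
      have e2 : ∑ j ∈ (T.disjSum {r, s}).erase (inr r), v j = WW w i T + g s := by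
        rw [hv, sum_velim, erase_inr_eq, Finset.toLeft_disjSum, Finset.toRight_disjSum,
          Finset.toLeft_disjSum, Finset.toRight_disjSum, Finset.erase_insert hrns,
          Finset.sum_singleton]
      refine ⟨⟨by simp, ?_, ?_⟩, by simp⟩
      · unfold winning; rw [e1]; omega
      · unfold winning; rw [e2]; omega
    · intro S hS
      simp only [Finset.mem_filter, Finset.mem_univ, true_and] at hS
      obtain ⟨⟨hrS, _, _⟩, hsS⟩ := hS
      show S.toLeft.disjSum {r, s} = S
      rw [← toRight_eq_pair hall hrS hsS, Finset.toLeft_disjSum_toRight]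
    · intro T _; exact Finset.toLeft_disjSum ..
  unfold eta
  rw [← Finset.card_filter_add_card_filter_not
    (p := fun S : Finset ({x : α // x ≠ i} ⊕ Fin 2) => inr s ∈ S),
    Finset.filter_filter, Finset.filter_filter, h1, h2, Nat.add_comm]

lemma eta_orig :
    eta q w i = (Finset.univ.filter fun T : Finset {x : α // x ≠ i} =>
      WW w i T < q ∧ q ≤ WW w i T + w i).card := by
  have hsub : ∀ S : Finset α, WW w i (S.subtype (· ≠ i)) = ∑ j ∈ S.erase i, w j := by
    intro S
    rw [WW, Finset.sum_subtype_eq_sum_filter, Finset.filter_ne']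
  have hmapsum : ∀ T : Finset {x : α // x ≠ i},
      ∑ j ∈ T.map (Function.Embedding.subtype _), w j = WW w i T := by
    intro T; rw [Finset.sum_map]; rfl
  have hnotmem : ∀ T : Finset {x : α // x ≠ i},
      i ∉ T.map (Function.Embedding.subtype _) := by
    intro T h
    simp only [Finset.mem_map, Function.Embedding.coe_subtype] at h
    obtain ⟨z, _, hz⟩ := h
    exact z.2 hz
  unfold eta
  refine Finset.card_bij' (fun S _ => S.subtype (· ≠ i))
    (fun T _ => insert i (T.map (Function.Embedding.subtype _))) ?_ ?_ ?_ ?_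
  · intro S hS
    simp only [Finset.mem_filter, Finset.mem_univ, true_and] at hS ⊢
    obtain ⟨hiS, hwin, hlose⟩ := hS
    unfold winning at hwin hlose
    rw [← Finset.sum_erase_add _ _ hiS, ← hsub S] at hwin
    rw [← hsub S] at hlose
    exact ⟨by omega, hwin⟩
  · intro T hT
    simp only [Finset.mem_filter, Finset.mem_univ, true_and] at hT ⊢
    obtain ⟨h1, h2⟩ := hT
    refine ⟨Finset.mem_insert_self _ _, ?_, ?_⟩
    · unfold winning
      rw [Finset.sum_insert (hnotmem T), hmapsum]
      omega
    · unfold winning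
      rw [Finset.erase_insert (hnotmem T), hmapsum]
      omega
  · intro S hS
    simp only [Finset.mem_filter, Finset.mem_univ, true_and] at hS
    show insert i ((S.subtype (· ≠ i)).map _) = S
    rw [Finset.subtype_map, Finset.filter_ne', Finset.insert_erase hS.1]
  · intro T hT
    show (insert i (T.map _)).subtype (· ≠ i) = T
    ext x
    obtain ⟨y, hy⟩ := x
    simp only [Finset.mem_subtype, Finset.mem_insert, Finset.mem_map,
      Function.Embedding.coe_subtype]
    constructor
    · rintro (h | ⟨z, hz, rfl⟩)
      · exact absurd h hy
      · have : (⟨(z : α), hy⟩ : {x : α // x ≠ i}) = z := Subtype.ext rfl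
        rw [this]; exact hz
    · intro h; exact Or.inr ⟨⟨y, hy⟩, h, rfl⟩

lemma eta_left (g : Fin 2 → ℕ) (hg : g 0 + g 1 = w i) (k : {x : α // x ≠ i}) :
    eta q w k.1 ≤ eta q (Sum.elim (fun x : {x : α // x ≠ i} => w x.1) g) (inl k) := by
  set v := Sum.elim (fun x : {x : α // x ≠ i} => w x.1) g with hv
  set ψ : Finset α → Finset ({x : α // x ≠ i} ⊕ Fin 2) :=
    fun S => (S.subtype (· ≠ i)).disjSum
      (if i ∈ S then (Finset.univ : Finset (Fin 2)) else ∅) with hψ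
  have hwt : ∀ S : Finset α, ∑ j ∈ ψ S, v j = ∑ j ∈ S, w j := by
    intro S
    rw [hψ, hv]
    simp only
    rw [Finset.sum_sumElim, Finset.sum_subtype_eq_sum_filter, Finset.filter_ne']
    by_cases hiS : i ∈ S
    · rw [if_pos hiS, Fin.sum_univ_two, hg, Finset.sum_erase_add _ _ hiS]
    · rw [if_neg hiS, Finset.sum_empty, add_zero, Finset.erase_eq_self.2 hiS]
  have herase : ∀ S : Finset α, (ψ S).erase (inl k) = ψ (S.erase k.1) := by
    intro S
    have hik : i ∈ S.erase k.1 ↔ i ∈ S := by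
      rw [Finset.mem_erase]
      simp [Ne.symm k.2]
    ext x
    cases x with
    | inl y =>
      simp only [hψ, Finset.mem_erase, Finset.inl_mem_disjSum, Finset.mem_subtype,
        Subtype.ext_iff, ne_eq, Sum.inl.injEq]
    | inr e =>
      simp only [hψ, Finset.mem_erase, Finset.inr_mem_disjSum, hik]
      simp
  unfold eta
  apply Finset.card_le_card_of_injOn ψ
  · intro S hS
    simp only [Finset.mem_coe, Finset.mem_filter, Finset.mem_univ, true_and] at hS ⊢
    obtain ⟨hkS, hwin, hlose⟩ := hS
    refine ⟨?_, ?_, ?_⟩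
    · simp [hψ, Finset.mem_subtype, hkS]
    · unfold winning at hwin ⊢
      rw [hwt]; exact hwin
    · unfold winning at hlose ⊢
      rw [herase, hwt]; exact hlose
  · intro S₁ h₁ S₂ h₂ hψeq
    have hL : S₁.subtype (· ≠ i) = S₂.subtype (· ≠ i) := by
      have := congrArg Finset.toLeft hψeq
      simpa [hψ] using this
    have hR : (if i ∈ S₁ then (Finset.univ : Finset (Fin 2)) else ∅)
        = (if i ∈ S₂ then (Finset.univ : Finset (Fin 2)) else ∅) := by
      have := congrArg Finset.toRight hψeq
      simpa [hψ] using this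
    have huniv : ((Finset.univ : Finset (Fin 2))) ≠ ∅ := Finset.univ_nonempty.ne_empty
    have hiff : i ∈ S₁ ↔ i ∈ S₂ := by
      by_cases h1 : i ∈ S₁ <;> by_cases h2 : i ∈ S₂ <;>
        simp [h1, h2] at hR ⊢ <;> simp_all
    ext x
    by_cases hx : x = i
    · subst hx; exact hiff
    · have hmm : (⟨x, hx⟩ : {y : α // y ≠ i}) ∈ S₁.subtype (· ≠ i)
          ↔ (⟨x, hx⟩ : {y : α // y ≠ i}) ∈ S₂.subtype (· ≠ i) := by rw [hL]
      simpa [Finset.mem_subtype] using hmm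

lemma interval_count {σ : Type*} [Fintype σ] (f : σ → ℕ) (q c d : ℕ) :
    (Finset.univ.filter fun T : σ => f T < q ∧ q ≤ f T + c).card
      + (Finset.univ.filter fun T : σ => f T + c < q ∧ q ≤ f T + c + d).card
      = (Finset.univ.filter fun T : σ => f T < q ∧ q ≤ f T + (c + d)).card := by
  rw [← Finset.card_union_of_disjoint (by
    rw [Finset.disjoint_filter]
    intro x _ hx hx'
    omega)]
  congr 1
  rw [← Finset.filter_or]
  apply Finset.filter_congr
  intro x _
  constructor
  · intro h; rcases h with h | h <;> omega
  · intro h; omega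

lemma eta_sum_eq (g : Fin 2 → ℕ) (hg : g 0 + g 1 = w i) :
    eta q (Sum.elim (fun x : {x : α // x ≠ i} => w x.1) g) (inr 0)
      + eta q (Sum.elim (fun x : {x : α // x ≠ i} => w x.1) g) (inr 1)
      = 2 * eta q w i := by
  rw [eta_inr g 0 1 (by decide) (by decide), eta_inr g 1 0 (by decide) (by decide)]
  have h1 := interval_count (WW w i) q (g 0) (g 1)
  have h2 := interval_count (WW w i) q (g 1) (g 0)
  rw [hg] at h1
  rw [Nat.add_comm (g 1) (g 0), hg] at h2
  rw [eta_orig]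
  omega

lemma total_le (g : Fin 2 → ℕ) (hg : g 0 + g 1 = w i) :
    totalEta q w ≤ totalEta q (Sum.elim (fun x : {x : α // x ≠ i} => w x.1) g) := by
  unfold totalEta
  rw [Fintype.sum_sum_type]
  have hsplit : ∑ k : α, eta q w k
      = ∑ k ∈ Finset.univ.erase i, eta q w k + eta q w i :=
    (Finset.sum_erase_add _ _ (Finset.mem_univ i)).symm
  rw [hsplit]
  apply Nat.add_le_add
  · have he : ∑ k ∈ Finset.univ.erase i, eta q w k
        = ∑ k : {x : α // x ≠ i}, eta q w k.1 := by
      rw [← Finset.filter_ne', ← Finset.sum_subtype_eq_sum_filter, Finset.subtype_univ]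
    rw [he]
    exact Finset.sum_le_sum fun k _ => eta_left g hg k
  · rw [Fin.sum_univ_two]
    have := eta_sum_eq (q := q) g hg
    omega

end SplitAux

/-- If player `i` splits into two players of positive weights summing to `w i`,
the sum of the Banzhaf indices of the two sub-players is at most twice
the Banzhaf index of `i` in the original game. -/
theorem split_banzhaf_le_two_mul
    (α : Type*) [Fintype α] [DecidableEq α]
    (q : ℕ) (w : α → ℕ) (i : α) (a b : ℕ) (ha : 0 < a) (hb : 0 < b)
    (hab : a + b = w i) (htot : 0 < totalEta q w)
    (w' : {x : α // x ≠ i} ⊕ Fin 2 → ℕ)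
    (hw' : w' = Sum.elim (fun x : {x : α // x ≠ i} => w x.1) ![a, b]) :
    banzhaf q w' (Sum.inr 0) + banzhaf q w' (Sum.inr 1) ≤ 2 * banzhaf q w i := by
  subst hw'
  have hg : (![a, b] : Fin 2 → ℕ) 0 + (![a, b] : Fin 2 → ℕ) 1 = w i := by simpa using hab
  have hnum := SplitAux.eta_sum_eq (q := q) (w := w) (i := i) ![a, b] hg
  have htot' := SplitAux.total_le (q := q) (w := w) (i := i) ![a, b] hg
  unfold banzhaf
  rw [← add_div, ← mul_div_assoc]
  have h0 : (0:ℚ) < (totalEta q w : ℚ) := by exact_mod_cast htot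
  have h1 : (0:ℚ) <
      (totalEta q (Sum.elim (fun x : {x : α // x ≠ i} => w x.1) ![a, b]) : ℚ) := by
    exact_mod_cast lt_of_lt_of_le htot htot'
  rw [div_le_div_iff₀ h1 h0]
  have key : (eta q (Sum.elim (fun x : {x : α // x ≠ i} => w x.1) ![a, b]) (Sum.inr 0)
        + eta q (Sum.elim (fun x : {x : α // x ≠ i} => w x.1) ![a, b]) (Sum.inr 1))
        * totalEta q w
      ≤ 2 * eta q w i
        * totalEta q (Sum.elim (fun x : {x : α // x ≠ i} => w x.1) ![a, b]) := by
    rw [hnum]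
    exact Nat.mul_le_mul_left _ htot'
  exact_mod_cast key
end

section
/- Consider the WVG v = [3n/2; 2n, 1, 1, ..., 1] with n players (one player of weight 2n and n−1 players of weight 1), where n is even. If player 1 splits into two players of weight n each, then in the resulting game v' on n+1 players, each split player has raw Banzhaf count 2^{n-1}, and each weight-1 player has raw Banzhaf count 2·C(n-2, (n-2)/2). -/
open scoped Classical

section DSAux
open Finset

variable {n : ℕ}

private lemma ds_sum_w (w' : Fin (n + 1) → ℕ)
    (hw' : w' = fun j : Fin (n + 1) => if (j : ℕ) < 2 then n else 1)
    (S : Finset (Fin (n+1))) :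
    ∑ j ∈ S, w' j
      = n * (S.filter fun j : Fin (n+1) => (j:ℕ) < 2).card
        + (S.filter fun j : Fin (n+1) => ¬ (j:ℕ) < 2).card := by
  rw [← Finset.sum_filter_add_sum_filter_not S (fun j : Fin (n+1) => (j:ℕ) < 2)]
  congr 1
  · have h1 : ∀ j ∈ S.filter (fun j : Fin (n+1) => (j:ℕ)<2), w' j = n := by
      intro j hj; simp only [hw', if_pos (Finset.mem_filter.mp hj).2]
    rw [Finset.sum_congr rfl h1, Finset.sum_const, smul_eq_mul, mul_comm]
  · have h1 : ∀ j ∈ S.filter (fun j : Fin (n+1) => ¬(j:ℕ)<2), w' j = 1 := by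
      intro j hj; simp only [hw', if_neg (Finset.mem_filter.mp hj).2]
    rw [Finset.sum_congr rfl h1, Finset.sum_const, smul_eq_mul, mul_one]

private lemma ds_bigs_card (hn2 : 2 ≤ n) :
    (Finset.univ.filter fun j : Fin (n+1) => (j:ℕ) < 2).card = 2 := by
  have : (Finset.univ.filter fun j : Fin (n+1) => (j:ℕ) < 2)
      = {(⟨0, by omega⟩ : Fin (n+1)), ⟨1, by omega⟩} := by
    ext j
    simp only [mem_filter, mem_univ, true_and, mem_insert, mem_singleton, Fin.ext_iff]
    omega
  rw [this, card_insert_of_notMem (by simp [Fin.ext_iff]), card_singleton]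

private lemma ds_smalls_card (hn2 : 2 ≤ n) :
    (Finset.univ.filter fun j : Fin (n+1) => ¬ (j:ℕ) < 2).card = n - 1 := by
  have h := Finset.card_filter_add_card_filter_not (s := (univ : Finset (Fin (n+1))))
    (p := fun j : Fin (n+1) => (j:ℕ) < 2)
  rw [ds_bigs_card hn2, Finset.card_univ, Fintype.card_fin] at h
  omega

private lemma ds_k_le (hn2 : 2 ≤ n) (S : Finset (Fin (n+1))) :
    (S.filter fun j : Fin (n+1) => ¬ (j:ℕ) < 2).card ≤ n - 1 := by
  rw [← ds_smalls_card hn2]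
  exact Finset.card_le_card (Finset.filter_subset_filter _ (Finset.subset_univ S))

private lemma ds_filter_big_eq (b b' : Fin (n+1)) (hb : (b:ℕ) < 2) (hb' : (b':ℕ) < 2)
    (hbb : b ≠ b') (S : Finset (Fin (n+1))) (hbS : b ∈ S) :
    (S.filter fun j : Fin (n+1) => (j:ℕ) < 2) = if b' ∈ S then {b, b'} else {b} := by
  have hbig2 : ∀ j : Fin (n+1), (j:ℕ) < 2 → j = b ∨ j = b' := by
    intro j hj; simp only [Fin.ext_iff]; omega
  ext j
  simp only [mem_filter]
  split_ifs with h
  · simp only [mem_insert, mem_singleton]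
    constructor
    · rintro ⟨hjS, hj2⟩; exact hbig2 j hj2
    · rintro (rfl | rfl) <;> exact ⟨by assumption, by assumption⟩
  · simp only [mem_singleton]
    constructor
    · rintro ⟨hjS, hj2⟩
      rcases hbig2 j hj2 with rfl | rfl
      · rfl
      · exact absurd hjS h
    · rintro rfl; exact ⟨hbS, hb⟩

private lemma ds_crit_big (m : ℕ) (hm : 1 ≤ m) (hn : n = m + m)
    (w' : Fin (n + 1) → ℕ)
    (hw' : w' = fun j : Fin (n + 1) => if (j : ℕ) < 2 then n else 1)
    (b b' : Fin (n+1)) (hb : (b:ℕ) < 2) (hb' : (b':ℕ) < 2) (hbb : b ≠ b')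
    (S : Finset (Fin (n+1))) (hbS : b ∈ S) :
    ((winning (3*m) w' S ∧ ¬ winning (3*m) w' (S.erase b)) ↔
      (if b' ∈ S then (S.filter fun j : Fin (n+1) => ¬ (j:ℕ) < 2).card < m
       else m ≤ (S.filter fun j : Fin (n+1) => ¬ (j:ℕ) < 2).card)) := by
  have hn2 : 2 ≤ n := by omega
  set k := (S.filter fun j : Fin (n+1) => ¬ (j:ℕ) < 2).card with hk
  have hkb : k ≤ n - 1 := ds_k_le hn2 S
  have hfb := ds_filter_big_eq b b' hb hb' hbb S hbS
  have hfeb : ((S.erase b).filter fun j : Fin (n+1) => (j:ℕ) < 2)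
      = if b' ∈ S then {b'} else ∅ := by
    rw [Finset.filter_erase, hfb]
    split_ifs
    · exact Finset.erase_insert (by simpa using hbb)
    · simp
  have hfes : ((S.erase b).filter fun j : Fin (n+1) => ¬ (j:ℕ) < 2)
      = S.filter fun j : Fin (n+1) => ¬ (j:ℕ) < 2 := by
    rw [Finset.filter_erase]
    apply Finset.erase_eq_of_notMem
    simp [hb]; omega
  have hw1 : ∑ j ∈ S, w' j = n * (if b' ∈ S then 2 else 1) + k := by
    rw [ds_sum_w w' hw', hfb]; split_ifs
    · rw [Finset.card_insert_of_notMem (by simpa using hbb), card_singleton]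
    · rw [card_singleton]
  have hw2 : ∑ j ∈ S.erase b, w' j = n * (if b' ∈ S then 1 else 0) + k := by
    rw [ds_sum_w w' hw', hfeb, hfes, ← hk]; split_ifs <;> simp
  unfold winning
  rw [hw1, hw2]
  split_ifs <;> constructor <;> intro h <;> omega

private lemma ds_eta_big (m : ℕ) (hm : 1 ≤ m) (hn : n = m + m)
    (w' : Fin (n + 1) → ℕ)
    (hw' : w' = fun j : Fin (n + 1) => if (j : ℕ) < 2 then n else 1)
    (b b' : Fin (n+1)) (hb : (b:ℕ) < 2) (hb' : (b':ℕ) < 2) (hbb : b ≠ b') :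
    eta (3*m) w' b = 2 ^ (n-1) := by
  have hn2 : 2 ≤ n := by omega
  unfold eta
  have hre : (Finset.univ.filter fun S : Finset (Fin (n+1)) =>
        b ∈ S ∧ winning (3*m) w' S ∧ ¬ winning (3*m) w' (S.erase b))
      = (Finset.univ.filter fun S : Finset (Fin (n+1)) =>
        b ∈ S ∧ (if b' ∈ S then (S.filter fun j : Fin (n+1) => ¬ (j:ℕ) < 2).card < m
         else m ≤ (S.filter fun j : Fin (n+1) => ¬ (j:ℕ) < 2).card)) := by
    apply Finset.filter_congr
    intro S _
    constructor
    · rintro ⟨h1, h2⟩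
      exact ⟨h1, (ds_crit_big m hm hn w' hw' b b' hb hb' hbb S h1).mp h2⟩
    · rintro ⟨h1, h2⟩
      exact ⟨h1, (ds_crit_big m hm hn w' hw' b b' hb hb' hbb S h1).mpr h2⟩
  rw [hre]
  have hcard : ((Finset.univ.filter fun j : Fin (n+1) => ¬ (j:ℕ) < 2).powerset).card
      = 2 ^ (n-1) := by
    rw [Finset.card_powerset, ds_smalls_card hn2]
  rw [← hcard]
  apply Finset.card_bij (i := fun S _ => S.filter fun j : Fin (n+1) => ¬ (j:ℕ) < 2)
  · intro S hS
    simp only [Finset.mem_powerset]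
    exact Finset.filter_subset_filter _ (Finset.subset_univ S)
  · intro S1 hS1 S2 hS2 hT
    simp only [Finset.mem_filter, Finset.mem_univ, true_and] at hS1 hS2
    obtain ⟨hb1, hc1⟩ := hS1
    obtain ⟨hb2, hc2⟩ := hS2
    have hd1 := Finset.filter_union_filter_not_eq
      (p := fun j : Fin (n+1) => (j:ℕ) < 2) S1
    have hd2 := Finset.filter_union_filter_not_eq
      (p := fun j : Fin (n+1) => (j:ℕ) < 2) S2
    have hsame : (b' ∈ S1) = (b' ∈ S2) := by
      by_cases h1 : b' ∈ S1 <;> by_cases h2 : b' ∈ S2 <;>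
        simp_all only [if_true, if_false, eq_self_iff_true] <;> omega
    rw [← hd1, ← hd2, ds_filter_big_eq b b' hb hb' hbb S1 hb1,
      ds_filter_big_eq b b' hb hb' hbb S2 hb2, hT]
    congr 1
    exact if_congr (iff_of_eq hsame) rfl rfl
  · intro T hT
    simp only [Finset.mem_powerset] at hT
    have hTs : ∀ j ∈ T, ¬ (j:ℕ) < 2 := fun j hj => (Finset.mem_filter.mp (hT hj)).2
    have hbT : b ∉ T := fun h => hTs b h hb
    have hb'T : b' ∉ T := fun h => hTs b' h hb'
    by_cases hc : m ≤ T.card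
    · refine ⟨insert b T, ?_, ?_⟩
      · simp only [Finset.mem_filter, Finset.mem_univ, true_and]
        have hb'S : b' ∉ insert b T := by
          simp only [Finset.mem_insert]
          rintro (rfl | h)
          · exact hbb rfl
          · exact hb'T h
        refine ⟨Finset.mem_insert_self _ _, ?_⟩
        rw [if_neg hb'S]
        have : ((insert b T).filter fun j : Fin (n+1) => ¬ (j:ℕ) < 2) = T := by
          rw [Finset.filter_insert, if_neg (by simpa using hb)]
          exact Finset.filter_true_of_mem hTs
        rw [this]; exact hc
      · rw [Finset.filter_insert, if_neg (by simpa using hb)]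
        exact Finset.filter_true_of_mem hTs
    · refine ⟨insert b (insert b' T), ?_, ?_⟩
      · simp only [Finset.mem_filter, Finset.mem_univ, true_and]
        have hb'S : b' ∈ insert b (insert b' T) :=
          Finset.mem_insert_of_mem (Finset.mem_insert_self _ _)
        refine ⟨Finset.mem_insert_self _ _, ?_⟩
        rw [if_pos hb'S]
        have : ((insert b (insert b' T)).filter fun j : Fin (n+1) => ¬ (j:ℕ) < 2) = T := by
          rw [Finset.filter_insert, if_neg (by simpa using hb),
            Finset.filter_insert, if_neg (by simpa using hb')]
          exact Finset.filter_true_of_mem hTs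
        rw [this]; omega
      · rw [Finset.filter_insert, if_neg (by simpa using hb),
          Finset.filter_insert, if_neg (by simpa using hb')]
        exact Finset.filter_true_of_mem hTs

private lemma ds_crit_small (m : ℕ) (hm : 1 ≤ m) (hn : n = m + m)
    (w' : Fin (n + 1) → ℕ)
    (hw' : w' = fun j : Fin (n + 1) => if (j : ℕ) < 2 then n else 1)
    (i : Fin (n+1)) (hi : 2 ≤ (i:ℕ))
    (S : Finset (Fin (n+1))) (hiS : i ∈ S) :
    ((winning (3*m) w' S ∧ ¬ winning (3*m) w' (S.erase i)) ↔
      ((S.filter fun j : Fin (n+1) => (j:ℕ) < 2).card = 1 ∧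
       (S.filter fun j : Fin (n+1) => ¬ (j:ℕ) < 2).card = m)) := by
  have hn2 : 2 ≤ n := by omega
  set a := (S.filter fun j : Fin (n+1) => (j:ℕ) < 2).card with ha
  set k := (S.filter fun j : Fin (n+1) => ¬ (j:ℕ) < 2).card with hk
  have hka : a ≤ 2 := by
    rw [← ds_bigs_card hn2]
    exact Finset.card_le_card (Finset.filter_subset_filter _ (Finset.subset_univ S))
  have hkb : k ≤ n - 1 := ds_k_le hn2 S
  have hif : i ∈ S.filter fun j : Fin (n+1) => ¬ (j:ℕ) < 2 :=
    Finset.mem_filter.mpr ⟨hiS, by omega⟩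
  have hk1 : 1 ≤ k := Finset.card_pos.mpr ⟨i, hif⟩
  have hfeb : ((S.erase i).filter fun j : Fin (n+1) => (j:ℕ) < 2)
      = S.filter fun j : Fin (n+1) => (j:ℕ) < 2 := by
    rw [Finset.filter_erase]
    exact Finset.erase_eq_of_notMem (by simp; omega)
  have hfes : ((S.erase i).filter fun j : Fin (n+1) => ¬ (j:ℕ) < 2).card = k - 1 := by
    rw [Finset.filter_erase, Finset.card_erase_of_mem hif]
  unfold winning
  rw [ds_sum_w w' hw' S, ds_sum_w w' hw' (S.erase i), hfeb, hfes, ← ha, ← hk]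
  clear_value a k
  subst hn
  have h3 : a = 0 ∨ a = 1 ∨ a = 2 := by omega
  rcases h3 with rfl | rfl | rfl <;> (constructor <;> intro h <;> omega)

private lemma ds_eta_small (m : ℕ) (hm : 1 ≤ m) (hn : n = m + m)
    (w' : Fin (n + 1) → ℕ)
    (hw' : w' = fun j : Fin (n + 1) => if (j : ℕ) < 2 then n else 1)
    (i : Fin (n+1)) (hi : 2 ≤ (i:ℕ)) :
    eta (3*m) w' i = 2 * (n - 2).choose ((n-2)/2) := by
  have hn2 : 2 ≤ n := by omega
  unfold eta
  have hre : (Finset.univ.filter fun S : Finset (Fin (n+1)) =>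
        i ∈ S ∧ winning (3*m) w' S ∧ ¬ winning (3*m) w' (S.erase i))
      = (Finset.univ.filter fun S : Finset (Fin (n+1)) =>
        i ∈ S ∧ (S.filter fun j : Fin (n+1) => (j:ℕ) < 2).card = 1 ∧
        (S.filter fun j : Fin (n+1) => ¬ (j:ℕ) < 2).card = m) := by
    apply Finset.filter_congr
    intro S _
    constructor
    · rintro ⟨h1, h2⟩
      exact ⟨h1, (ds_crit_small m hm hn w' hw' i hi S h1).mp h2⟩
    · rintro ⟨h1, h2⟩
      exact ⟨h1, (ds_crit_small m hm hn w' hw' i hi S h1).mpr h2⟩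
  rw [hre]
  have hism : i ∈ (Finset.univ.filter fun j : Fin (n+1) => ¬ (j:ℕ) < 2) := by
    simp; omega
  have hprodcard :
      (((Finset.univ.filter fun j : Fin (n+1) => (j:ℕ) < 2)) ×ˢ
        (((Finset.univ.filter fun j : Fin (n+1) => ¬ (j:ℕ) < 2).erase i).powersetCard
          (m-1))).card
      = 2 * (n - 2).choose ((n-2)/2) := by
    rw [Finset.card_product, ds_bigs_card hn2, Finset.card_powersetCard,
      Finset.card_erase_of_mem hism, ds_smalls_card hn2]
    congr 2
    omega
  rw [← hprodcard]
  symm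
  apply Finset.card_bij (i := fun p _ => insert p.1 (insert i p.2))
  · rintro ⟨b, T⟩ hp
    simp only [Finset.mem_product, Finset.mem_filter, Finset.mem_univ, true_and,
      Finset.mem_powersetCard] at hp
    obtain ⟨hbbig, hTsub, hTcard⟩ := hp
    have hTs : ∀ j ∈ T, ¬ (j:ℕ) < 2 := fun j hj =>
      (Finset.mem_filter.mp (Finset.mem_of_mem_erase (hTsub hj))).2
    have hiT : i ∉ T := fun h => Finset.notMem_erase i _ (hTsub h)
    have hfs : ((insert b (insert i T)).filter fun j : Fin (n+1) => ¬ (j:ℕ) < 2)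
        = insert i T := by
      rw [Finset.filter_insert, if_neg (by simpa using hbbig), Finset.filter_insert,
        if_pos (by omega), Finset.filter_true_of_mem hTs]
    have hfbg : ((insert b (insert i T)).filter fun j : Fin (n+1) => (j:ℕ) < 2)
        = {b} := by
      rw [Finset.filter_insert, if_pos hbbig, Finset.filter_insert,
        if_neg (by omega), Finset.filter_false_of_mem (by simpa using hTs)]
      rfl
    simp only [Finset.mem_filter, Finset.mem_univ, true_and]
    refine ⟨Finset.mem_insert_of_mem (Finset.mem_insert_self _ _), ?_, ?_⟩
    · rw [hfbg, Finset.card_singleton]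
    · rw [hfs, Finset.card_insert_of_notMem hiT, hTcard]; omega
  · rintro ⟨b1, T1⟩ hp1 ⟨b2, T2⟩ hp2 heq
    simp only [Finset.mem_product, Finset.mem_filter, Finset.mem_univ, true_and,
      Finset.mem_powersetCard] at hp1 hp2
    obtain ⟨hb1, hT1sub, hT1card⟩ := hp1
    obtain ⟨hb2, hT2sub, hT2card⟩ := hp2
    have hT1s : ∀ j ∈ T1, ¬ (j:ℕ) < 2 := fun j hj =>
      (Finset.mem_filter.mp (Finset.mem_of_mem_erase (hT1sub hj))).2
    have hT2s : ∀ j ∈ T2, ¬ (j:ℕ) < 2 := fun j hj =>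
      (Finset.mem_filter.mp (Finset.mem_of_mem_erase (hT2sub hj))).2
    have hiT1 : i ∉ T1 := fun h => Finset.notMem_erase i _ (hT1sub h)
    have hiT2 : i ∉ T2 := fun h => Finset.notMem_erase i _ (hT2sub h)
    have hfb1 : ((insert b1 (insert i T1)).filter fun j : Fin (n+1) => (j:ℕ) < 2)
        = {b1} := by
      rw [Finset.filter_insert, if_pos hb1, Finset.filter_insert,
        if_neg (by omega), Finset.filter_false_of_mem (by simpa using hT1s)]
      rfl
    have hfb2 : ((insert b2 (insert i T2)).filter fun j : Fin (n+1) => (j:ℕ) < 2)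
        = {b2} := by
      rw [Finset.filter_insert, if_pos hb2, Finset.filter_insert,
        if_neg (by omega), Finset.filter_false_of_mem (by simpa using hT2s)]
      rfl
    have hfs1 : ((insert b1 (insert i T1)).filter fun j : Fin (n+1) => ¬ (j:ℕ) < 2)
        = insert i T1 := by
      rw [Finset.filter_insert, if_neg (by simpa using hb1), Finset.filter_insert,
        if_pos (by omega), Finset.filter_true_of_mem hT1s]
    have hfs2 : ((insert b2 (insert i T2)).filter fun j : Fin (n+1) => ¬ (j:ℕ) < 2)
        = insert i T2 := by
      rw [Finset.filter_insert, if_neg (by simpa using hb2), Finset.filter_insert,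
        if_pos (by omega), Finset.filter_true_of_mem hT2s]
    have hbe : b1 = b2 := by
      have := hfb1.symm.trans (by rw [heq, hfb2])
      simpa using this
    have hTe : T1 = T2 := by
      have h1 : insert i T1 = insert i T2 := by
        rw [← hfs1, heq, hfs2]
      have := congrArg (fun s => Finset.erase s i) h1
      simpa [Finset.erase_insert hiT1, Finset.erase_insert hiT2] using this
    simp [hbe, hTe]
  · intro S hS
    simp only [Finset.mem_filter, Finset.mem_univ, true_and] at hS
    obtain ⟨hiS, hb1, hsm⟩ := hS
    obtain ⟨b, hbsing⟩ := Finset.card_eq_one.mp hb1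
    have hbbig : (b:ℕ) < 2 := by
      have : b ∈ S.filter fun j : Fin (n+1) => (j:ℕ) < 2 := by
        rw [hbsing]; exact Finset.mem_singleton_self b
      exact (Finset.mem_filter.mp this).2
    have hifs : i ∈ S.filter fun j : Fin (n+1) => ¬ (j:ℕ) < 2 :=
      Finset.mem_filter.mpr ⟨hiS, by omega⟩
    refine ⟨(b, ((S.filter fun j : Fin (n+1) => ¬ (j:ℕ) < 2).erase i)), ?_, ?_⟩
    · simp only [Finset.mem_product, Finset.mem_filter, Finset.mem_univ, true_and,
        Finset.mem_powersetCard]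
      refine ⟨hbbig, ?_, ?_⟩
      · exact Finset.erase_subset_erase i
          (Finset.filter_subset_filter _ (Finset.subset_univ S))
      · rw [Finset.card_erase_of_mem hifs, hsm]
    · have h1 : insert i ((S.filter fun j : Fin (n+1) => ¬ (j:ℕ) < 2).erase i)
          = S.filter fun j : Fin (n+1) => ¬ (j:ℕ) < 2 :=
        Finset.insert_erase hifs
      rw [h1, Finset.insert_eq, ← hbsing, Finset.filter_union_filter_not_eq]

end DSAux

/-- If in `[3n/2; 2n, 1, ..., 1]` (n players, n even) the dictator of weight
`2n` splits into two players of weight `n`, then in the resulting game on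
`n+1` players each split player has raw Banzhaf count `2^(n-1)` and each
weight-1 player has raw Banzhaf count `2·C(n-2, (n-2)/2)`. -/
theorem dictator_split_counts (n : ℕ) (hn : Even n) (hn2 : 2 ≤ n)
    (w' : Fin (n + 1) → ℕ)
    (hw' : w' = fun j : Fin (n + 1) => if (j : ℕ) < 2 then n else 1) :
    (∀ j : Fin (n + 1), (j : ℕ) < 2 → eta (3 * n / 2) w' j = 2 ^ (n - 1)) ∧
    (∀ j : Fin (n + 1), 2 ≤ (j : ℕ) →
      eta (3 * n / 2) w' j = 2 * (n - 2).choose ((n - 2) / 2)) := by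
  obtain ⟨m, hm⟩ := hn
  have hm1 : 1 ≤ m := by omega
  have hq : 3 * n / 2 = 3 * m := by omega
  constructor
  · intro j hj
    rw [hq]
    set b' : Fin (n+1) := if (j:ℕ) = 0 then ⟨1, by omega⟩ else ⟨0, by omega⟩ with hb'def
    have hb'v : (b' : ℕ) = if (j:ℕ) = 0 then 1 else 0 := by
      rw [hb'def]; split_ifs <;> rfl
    have hb' : (b' : ℕ) < 2 := by rw [hb'v]; split_ifs <;> omega
    have hbb : j ≠ b' := by
      rw [Ne, Fin.ext_iff, hb'v]; split_ifs <;> omega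
    exact ds_eta_big m hm1 hm w' hw' j b' hj hb' hbb
  · intro j hj
    rw [hq]
    exact ds_eta_small m hm1 hm w' hw' j hj
end

section
/- Let v = [q; w_1,...,w_n] be a WVG, and let v' = v_{&{i,j}} be the game obtained when player i annexes (merges with) player j, forming a single player of weight w_i + w_j on the player set (N\{i,j}) ∪ {&{i,j}} with the same quota. Then η_{&{i,j}}(v') = (η_i(v) + η_j(v))/2 and for every other player x, η_x(v') ≤ η_x(v); consequently β_{&{i,j}}(v') ≥ (β_i(v) + β_j(v))/2. -/
open scoped Classical

set_option linter.unusedSectionVars false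


section MergeAux

open Finset

variable {α : Type*} [Fintype α] [DecidableEq α]

/-- weight of the merged coalition after pulling back along `Embedding.subtype`. -/
lemma sum_w'_eq (w : α → ℕ) (i j : α) (hij : i ≠ j)
    (S : Finset {x : α // x ≠ j}) :
    ∑ y ∈ S, (if y.1 = i then w i + w j else w y.1) =
      (if ⟨i, hij⟩ ∈ S then w j else 0) +
        ∑ y ∈ S.map (Function.Embedding.subtype _), w y := by
  rw [Finset.sum_map]
  by_cases hk : (⟨i, hij⟩ : {x : α // x ≠ j}) ∈ S
  · rw [if_pos hk, ← Finset.add_sum_erase _ _ hk, ← Finset.add_sum_erase _ _ hk]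
    simp only [Function.Embedding.coe_subtype, if_true]
    have : ∀ y ∈ S.erase ⟨i, hij⟩, (if y.1 = i then w i + w j else w y.1) = w y.1 := by
      intro y hy
      rw [if_neg]
      intro h
      exact (Finset.ne_of_mem_erase hy) (Subtype.ext h)
    rw [Finset.sum_congr rfl this]
    simp
    omega
  · rw [if_neg hk, zero_add]
    apply Finset.sum_congr rfl
    intro y hy
    have hne : y.1 ≠ i := fun h => hk (by rwa [show y = ⟨i, hij⟩ from Subtype.ext h] at hy)
    simp [Function.Embedding.coe_subtype, hne]

end MergeAux

section MergeAux2
open Finset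
variable {α : Type*} [Fintype α] [DecidableEq α]

lemma eta_merged_eq (q : ℕ) (w : α → ℕ) (i j : α) (hij : i ≠ j) :
    eta q (fun x : {x : α // x ≠ j} => if x.1 = i then w i + w j else w x.1) ⟨i, hij⟩ =
      (Finset.univ.filter fun T : Finset α =>
        i ∉ T ∧ j ∉ T ∧ q ≤ w i + w j + ∑ x ∈ T, w x ∧ ∑ x ∈ T, w x < q).card := by
  classical
  set w' : {x : α // x ≠ j} → ℕ := fun x => if x.1 = i then w i + w j else w x.1 with hw'
  set k : {x : α // x ≠ j} := ⟨i, hij⟩ with hk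
  unfold eta
  apply Finset.card_nbij' (fun S => (S.erase k).map (Function.Embedding.subtype _))
    (fun T => insert k (T.subtype (· ≠ j)))
  · intro S hS
    simp only [Finset.mem_coe, Finset.mem_filter, Finset.mem_univ, true_and] at hS ⊢
    obtain ⟨hkS, hwin, hlose⟩ := hS
    have hiT : i ∉ (S.erase k).map (Function.Embedding.subtype _) := by
      intro h
      obtain ⟨y, hy, hy2⟩ := Finset.mem_map.1 h
      exact (Finset.ne_of_mem_erase hy) (Subtype.ext hy2)
    have hjT : j ∉ (S.erase k).map (Function.Embedding.subtype _) := by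
      intro h
      exact (Finset.property_of_mem_map_subtype _ h) rfl
    refine ⟨hiT, hjT, ?_, ?_⟩
    · -- q ≤ w i + w j + ∑ over erased image
      have := sum_w'_eq w i j hij S
      unfold winning at hwin
      rw [this, if_pos hkS] at hwin
      have hmap : ∑ y ∈ S.map (Function.Embedding.subtype _), w y
          = w i + ∑ y ∈ (S.erase k).map (Function.Embedding.subtype _), w y := by
        rw [Finset.map_erase, ← Finset.add_sum_erase _ w
          (Finset.mem_map_of_mem _ hkS)]
        rfl
      omega
    · have := sum_w'_eq w i j hij (S.erase k)
      unfold winning at hlose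
      rw [this, if_neg (Finset.notMem_erase _ _), zero_add] at hlose
      exact lt_of_not_ge hlose
  · intro T hT
    simp only [Finset.mem_coe, Finset.mem_filter, Finset.mem_univ, true_and] at hT ⊢
    obtain ⟨hiT, hjT, hge, hlt⟩ := hT
    have hkT : k ∉ T.subtype (· ≠ j) := by
      simp [hk, hiT]
    have hsub : ∑ y ∈ T.subtype (· ≠ j), w y.1 = ∑ x ∈ T, w x := by
      have h1 : ∑ x ∈ (T.subtype (· ≠ j)).map (Function.Embedding.subtype _), w x
          = ∑ y ∈ T.subtype (· ≠ j), w y.1 := by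
        rw [Finset.sum_map]
        simp [Function.Embedding.coe_subtype]
      rw [← h1, Finset.subtype_map, Finset.filter_true_of_mem]
      intro x hx
      exact fun h => hjT (h ▸ hx)
    refine ⟨Finset.mem_insert_self _ _, ?_, ?_⟩
    · unfold winning
      rw [Finset.sum_insert hkT]
      have : ∀ y ∈ T.subtype (· ≠ j), w' y = w y.1 := by
        intro y hy
        have : y.1 ∈ T := Finset.mem_subtype.1 hy
        have hne : y.1 ≠ i := fun h => hiT (h ▸ this)
        simp [hw', hne]
      rw [Finset.sum_congr rfl this, hsub]
      have : w' k = w i + w j := by simp [hw', hk]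
      omega
    · unfold winning
      rw [Finset.erase_insert hkT]
      have : ∀ y ∈ T.subtype (· ≠ j), w' y = w y.1 := by
        intro y hy
        have : y.1 ∈ T := Finset.mem_subtype.1 hy
        have hne : y.1 ≠ i := fun h => hiT (h ▸ this)
        simp [hw', hne]
      rw [Finset.sum_congr rfl this, hsub]
      omega
  · intro S hS
    simp only [Finset.mem_coe, Finset.mem_filter, Finset.mem_univ, true_and] at hS
    have hsub : ((S.erase k).map (Function.Embedding.subtype _)).subtype (· ≠ j)
        = S.erase k := by
      ext y
      simp only [Finset.mem_subtype, Finset.mem_map, Function.Embedding.coe_subtype,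
        Finset.mem_erase]
      constructor
      · rintro ⟨z, hz, hz2⟩
        rwa [show y = z from Subtype.ext hz2.symm]
      · intro hy
        exact ⟨y, hy, rfl⟩
    dsimp only
    rw [hsub, Finset.insert_erase hS.1]
  · intro T hT
    simp only [Finset.mem_coe, Finset.mem_filter, Finset.mem_univ, true_and] at hT
    have hkT : k ∉ T.subtype (· ≠ j) := by simp [hk, hT.1]
    dsimp only
    rw [Finset.erase_insert hkT, Finset.subtype_map, Finset.filter_true_of_mem]
    intro x hx
    exact fun h => hT.2.1 (h ▸ hx)

end MergeAux2

section MergeAux3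
open Finset
variable {α : Type*} [Fintype α] [DecidableEq α]

lemma eta_split (q : ℕ) (w : α → ℕ) (i j : α) (hij : i ≠ j) :
    eta q w i =
      (Finset.univ.filter fun T : Finset α =>
        i ∉ T ∧ j ∉ T ∧ q ≤ w i + w j + ∑ x ∈ T, w x ∧ w j + ∑ x ∈ T, w x < q).card +
      (Finset.univ.filter fun T : Finset α =>
        i ∉ T ∧ j ∉ T ∧ q ≤ w i + ∑ x ∈ T, w x ∧ ∑ x ∈ T, w x < q).card := by
  classical
  unfold eta
  rw [← Finset.card_filter_add_card_filter_not (p := fun S : Finset α => j ∈ S)]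
  congr 1
  · -- coalitions containing j
    apply Finset.card_nbij' (fun S => (S.erase i).erase j) (fun T => insert i (insert j T))
    · intro S hS
      simp only [Finset.mem_coe, Finset.mem_filter, Finset.mem_univ, true_and] at hS ⊢
      obtain ⟨⟨hiS, hwin, hlose⟩, hjS⟩ := hS
      unfold winning at hwin hlose
      have hjS' : j ∈ S.erase i := Finset.mem_erase.2 ⟨hij.symm, hjS⟩
      have h1 : ∑ x ∈ S.erase i, w x = w j + ∑ x ∈ (S.erase i).erase j, w x :=
        (Finset.add_sum_erase _ w hjS').symm
      have h2 : ∑ x ∈ S, w x = w i + ∑ x ∈ S.erase i, w x :=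
        (Finset.add_sum_erase _ w hiS).symm
      refine ⟨fun h => (Finset.notMem_erase i S) (Finset.mem_of_mem_erase h),
        Finset.notMem_erase _ _, by omega, by omega⟩
    · intro T hT
      simp only [Finset.mem_coe, Finset.mem_filter, Finset.mem_univ, true_and] at hT ⊢
      obtain ⟨hiT, hjT, hge, hlt⟩ := hT
      have hiT' : i ∉ insert j T := by simp [hij, hiT]
      have h1 : ∑ x ∈ insert i (insert j T), w x = w i + w j + ∑ x ∈ T, w x := by
        rw [Finset.sum_insert hiT', Finset.sum_insert hjT]
        ring
      have h2 : (insert i (insert j T)).erase i = insert j T := Finset.erase_insert hiT'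
      unfold winning
      rw [h2]
      refine ⟨⟨Finset.mem_insert_self _ _, by omega, ?_⟩, ?_⟩
      · rw [Finset.sum_insert hjT]
        omega
      · exact Finset.mem_insert_of_mem (Finset.mem_insert_self _ _)
    · intro S hS
      simp only [Finset.mem_coe, Finset.mem_filter, Finset.mem_univ, true_and] at hS
      obtain ⟨⟨hiS, _, _⟩, hjS⟩ := hS
      have hjS' : j ∈ S.erase i := Finset.mem_erase.2 ⟨hij.symm, hjS⟩
      dsimp only
      rw [Finset.insert_erase hjS', Finset.insert_erase hiS]
    · intro T hT
      simp only [Finset.mem_coe, Finset.mem_filter, Finset.mem_univ, true_and] at hT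
      have hiT' : i ∉ insert j T := by simp [hij, hT.1]
      dsimp only
      rw [Finset.erase_insert hiT', Finset.erase_insert hT.2.1]
  · -- coalitions not containing j
    apply Finset.card_nbij' (fun S => S.erase i) (fun T => insert i T)
    · intro S hS
      simp only [Finset.mem_coe, Finset.mem_filter, Finset.mem_univ, true_and] at hS ⊢
      obtain ⟨⟨hiS, hwin, hlose⟩, hjS⟩ := hS
      unfold winning at hwin hlose
      have h2 : ∑ x ∈ S, w x = w i + ∑ x ∈ S.erase i, w x :=
        (Finset.add_sum_erase _ w hiS).symm
      exact ⟨Finset.notMem_erase _ _,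
        fun h => hjS (Finset.mem_of_mem_erase h), by omega, by omega⟩
    · intro T hT
      simp only [Finset.mem_coe, Finset.mem_filter, Finset.mem_univ, true_and] at hT ⊢
      obtain ⟨hiT, hjT, hge, hlt⟩ := hT
      unfold winning
      rw [Finset.erase_insert hiT, Finset.sum_insert hiT]
      refine ⟨⟨Finset.mem_insert_self _ _, by omega, by omega⟩, ?_⟩
      simp [hjT, hij.symm]
    · intro S hS
      simp only [Finset.mem_coe, Finset.mem_filter, Finset.mem_univ, true_and] at hS
      exact Finset.insert_erase hS.1.1
    · intro T hT
      simp only [Finset.mem_coe, Finset.mem_filter, Finset.mem_univ, true_and] at hT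
      exact Finset.erase_insert hT.1

end MergeAux3

section MergeAux4
open Finset
variable {α : Type*} [Fintype α] [DecidableEq α]

lemma two_eta_merged (q : ℕ) (w : α → ℕ) (i j : α) (hij : i ≠ j) :
    2 * eta q (fun x : {x : α // x ≠ j} => if x.1 = i then w i + w j else w x.1) ⟨i, hij⟩ =
      eta q w i + eta q w j := by
  rw [eta_merged_eq q w i j hij, eta_split q w i j hij, eta_split q w j i hij.symm]
  simp only [Finset.card_filter]
  rw [Finset.mul_sum, ← Finset.sum_add_distrib, ← Finset.sum_add_distrib,
    ← Finset.sum_add_distrib]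
  apply Finset.sum_congr rfl
  intro T _
  by_cases hi : i ∈ T
  · simp [hi]
  by_cases hj : j ∈ T
  · simp [hj]
  · simp only [hi, hj, not_false_iff, true_and]
    split_ifs <;> omega

lemma eta_other_le (q : ℕ) (w : α → ℕ) (i j : α) (hij : i ≠ j)
    (x : α) (hx : x ≠ j) (hxi : x ≠ i) :
    eta q (fun y : {y : α // y ≠ j} => if y.1 = i then w i + w j else w y.1) ⟨x, hx⟩
      ≤ eta q w x := by
  classical
  set w' : {y : α // y ≠ j} → ℕ := fun y => if y.1 = i then w i + w j else w y.1 with hw'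
  set k : {y : α // y ≠ j} := ⟨i, hij⟩ with hk
  set e : {y : α // y ≠ j} ↪ α := Function.Embedding.subtype _ with he
  unfold eta
  apply Finset.card_le_card_of_injOn
    (fun S => if k ∈ S then insert j (S.map e) else S.map e)
  · intro S hS
    simp only [Finset.mem_coe, Finset.mem_filter, Finset.mem_univ, true_and] at hS ⊢
    obtain ⟨hxS, hwin, hlose⟩ := hS
    unfold winning at hwin hlose ⊢
    have hjmap : ∀ S' : Finset {y : α // y ≠ j}, j ∉ S'.map e := by
      intro S' h
      exact (Finset.property_of_mem_map_subtype _ h) rfl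
    have hkx : k ≠ ⟨x, hx⟩ := fun h => hxi (congrArg Subtype.val h).symm
    have hkerase : k ∈ S.erase ⟨x, hx⟩ ↔ k ∈ S := by
      rw [Finset.mem_erase]
      exact ⟨fun h => h.2, fun h => ⟨hkx, h⟩⟩
    have hex : e ⟨x, hx⟩ = x := rfl
    have hmap_erase : (S.erase ⟨x, hx⟩).map e = (S.map e).erase x := by
      rw [Finset.map_erase, hex]
    have hsum0 := sum_w'_eq w i j hij S
    have hsum20 := sum_w'_eq w i j hij (S.erase ⟨x, hx⟩)
    rw [← hw', ← he] at hsum0 hsum20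
    have hsum : ∑ y ∈ S, w' y
        = (if k ∈ S then w j else 0) + ∑ y ∈ S.map e, w y := hsum0
    have hsum2 : ∑ y ∈ S.erase ⟨x, hx⟩, w' y
        = (if k ∈ S.erase ⟨x, hx⟩ then w j else 0)
          + ∑ y ∈ (S.erase ⟨x, hx⟩).map e, w y := hsum20
    by_cases hkS : k ∈ S
    · rw [if_pos hkS]
      have hxmem : x ∈ insert j (S.map e) :=
        Finset.mem_insert_of_mem (hex ▸ Finset.mem_map_of_mem e hxS)
      have hs1 : ∑ y ∈ insert j (S.map e), w y = w j + ∑ y ∈ S.map e, w y :=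
        Finset.sum_insert (hjmap S)
      have hxj : (x : α) ≠ j := hx
      have herase : (insert j (S.map e)).erase x = insert j ((S.erase ⟨x, hx⟩).map e) := by
        rw [hmap_erase, Finset.erase_insert_of_ne hxj.symm]
      have hs2 : ∑ y ∈ (insert j (S.map e)).erase x, w y
          = w j + ∑ y ∈ (S.erase ⟨x, hx⟩).map e, w y := by
        rw [herase, Finset.sum_insert (hjmap _)]
      rw [if_pos hkS] at hsum
      rw [if_pos (hkerase.2 hkS)] at hsum2
      exact ⟨hxmem, by omega, by omega⟩
    · rw [if_neg hkS]
      have hxmem : x ∈ S.map e := hex ▸ Finset.mem_map_of_mem e hxS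
      rw [if_neg hkS, zero_add] at hsum
      rw [if_neg (fun h => hkS (hkerase.1 h)), zero_add] at hsum2
      rw [← hmap_erase]
      exact ⟨hxmem, by omega, by omega⟩
  · intro S1 h1 S2 h2 heq
    simp only at heq
    have hjmap : ∀ S' : Finset {y : α // y ≠ j}, j ∉ S'.map e := by
      intro S' h
      exact (Finset.property_of_mem_map_subtype _ h) rfl
    have hmapinj : ∀ S1 S2 : Finset {y : α // y ≠ j}, S1.map e = S2.map e → S1 = S2 :=
      fun _ _ h => Finset.map_injective e h
    by_cases hk1 : k ∈ S1 <;> by_cases hk2 : k ∈ S2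
    · rw [if_pos hk1, if_pos hk2] at heq
      apply hmapinj
      have := congrArg (fun s => Finset.erase s j) heq
      simpa [Finset.erase_insert (hjmap S1), Finset.erase_insert (hjmap S2)] using this
    · rw [if_pos hk1, if_neg hk2] at heq
      exact absurd (heq ▸ Finset.mem_insert_self j _) (hjmap S2)
    · rw [if_neg hk1, if_pos hk2] at heq
      exact absurd (heq.symm ▸ Finset.mem_insert_self j _) (hjmap S1)
    · rw [if_neg hk1, if_neg hk2] at heq
      exact hmapinj _ _ heq

end MergeAux4

section MergeAux5
open Finset
variable {α : Type*} [Fintype α] [DecidableEq α]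

lemma totalEta_merged_le (q : ℕ) (w : α → ℕ) (i j : α) (hij : i ≠ j) :
    totalEta q (fun x : {x : α // x ≠ j} => if x.1 = i then w i + w j else w x.1)
      ≤ totalEta q w := by
  classical
  set w' : {x : α // x ≠ j} → ℕ := fun x => if x.1 = i then w i + w j else w x.1 with hw'
  have key : totalEta q w'
      = ∑ x ∈ Finset.univ.filter (· ≠ j),
          (if h : x ≠ j then eta q w' ⟨x, h⟩ else 0) := by
    unfold totalEta
    rw [Finset.sum_subtype (p := fun x : α => x ≠ j) _ (by simp)
      (fun x => if h : x ≠ j then eta q w' ⟨x, h⟩ else 0)]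
    apply Finset.sum_congr rfl
    intro y _
    rw [dif_pos y.2]
  have hbound : ∑ x ∈ Finset.univ.filter (· ≠ j),
        (if h : x ≠ j then eta q w' ⟨x, h⟩ else 0)
      ≤ ∑ x ∈ Finset.univ.filter (· ≠ j),
          (eta q w x + if x = i then eta q w j else 0) := by
    apply Finset.sum_le_sum
    intro x hxmem
    have hx : x ≠ j := by simpa using hxmem
    rw [dif_pos hx]
    by_cases hxi : x = i
    · have hxx : (⟨x, hx⟩ : {y : α // y ≠ j}) = ⟨i, hij⟩ := Subtype.ext hxi
      rw [hxx, if_pos hxi, hxi]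
      have h2 := two_eta_merged q w i j hij
      rw [← hw'] at h2
      omega
    · rw [if_neg hxi]
      have := eta_other_le q w i j hij x hx hxi
      rw [← hw'] at this
      omega
  have hsplit : ∑ x ∈ Finset.univ.filter (· ≠ j),
        (eta q w x + if x = i then eta q w j else 0)
      = (∑ x ∈ Finset.univ.filter (· ≠ j), eta q w x) + eta q w j := by
    rw [Finset.sum_add_distrib]
    congr 1
    rw [Finset.sum_ite_eq' (Finset.univ.filter (· ≠ j)) i (fun _ => eta q w j)]
    simp [hij]
  have htotal : totalEta q w
      = (∑ x ∈ Finset.univ.filter (· ≠ j), eta q w x) + eta q w j := by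
    unfold totalEta
    rw [← Finset.sum_filter_add_sum_filter_not Finset.univ (· ≠ j) (eta q w)]
    congr 1
    rw [show Finset.univ.filter (fun x : α => ¬ x ≠ j) = {j} from by ext; simp,
      Finset.sum_singleton]
  omega

end MergeAux5

/-- If player `i` annexes (merges with) player `j`, the merged player's raw
Banzhaf count is `(η_i + η_j)/2`, every other player's raw count does not
increase, and consequently the merged player's Banzhaf index is at least
`(β_i + β_j)/2`. -/
theorem merge_banzhaf_bounds
    (α : Type*) [Fintype α] [DecidableEq α]
    (q : ℕ) (w : α → ℕ) (i j : α) (hij : i ≠ j)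
    (w' : {x : α // x ≠ j} → ℕ)
    (hw' : w' = fun x : {x : α // x ≠ j} => if x.1 = i then w i + w j else w x.1)
    (h1 : 0 < totalEta q w) (h2 : 0 < totalEta q w') :
    ((eta q w' ⟨i, hij⟩ : ℚ) = ((eta q w i : ℚ) + (eta q w j : ℚ)) / 2) ∧
    (∀ (x : α) (hx : x ≠ j), x ≠ i → eta q w' ⟨x, hx⟩ ≤ eta q w x) ∧
    ((banzhaf q w i + banzhaf q w j) / 2 ≤ banzhaf q w' ⟨i, hij⟩) := by
  have h2eta := two_eta_merged q w i j hij
  have hle := totalEta_merged_le q w i j hij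
  rw [← hw'] at h2eta hle
  have hT : (0:ℚ) < (totalEta q w : ℚ) := by exact_mod_cast h1
  have hT' : (0:ℚ) < (totalEta q w' : ℚ) := by exact_mod_cast h2
  have hTle : (totalEta q w' : ℚ) ≤ (totalEta q w : ℚ) := by exact_mod_cast hle
  have h2E : (2:ℚ) * (eta q w' ⟨i, hij⟩ : ℚ) = (eta q w i : ℚ) + (eta q w j : ℚ) := by
    exact_mod_cast h2eta
  refine ⟨by linarith, ?_, ?_⟩
  · intro x hx hxi
    have := eta_other_le q w i j hij x hx hxi
    rwa [← hw'] at this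
  · unfold banzhaf
    have step1 : ((eta q w i : ℚ) / (totalEta q w : ℚ)
        + (eta q w j : ℚ) / (totalEta q w : ℚ)) / 2
        = (eta q w' ⟨i, hij⟩ : ℚ) / (totalEta q w : ℚ) := by
      rw [← add_div, ← h2E]
      ring
    rw [step1]
    gcongr
end

section
/- In any WVG, if player i annexes a dummy player j (a player that is critical in no coalition), then the Banzhaf index of every remaining player in the new game equals its Banzhaf index in the original game; in particular β_{&{i,j}}(v') = β_i(v). -/
open scoped Classical

section Aux

variable {α : Type*} [Fintype α] [DecidableEq α]

lemma winning_mono {q : ℕ} {w : α → ℕ} {S T : Finset α} (h : S ⊆ T)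
    (hS : winning q w S) : winning q w T :=
  hS.trans (Finset.sum_le_sum_of_subset h)

lemma dummy_winning_erase {q : ℕ} {w : α → ℕ} {j : α} (hd : eta q w j = 0)
    (S : Finset α) : winning q w S ↔ winning q w (S.erase j) := by
  constructor
  · intro hS
    by_cases hj : j ∈ S
    · by_contra hc
      have h0 := Finset.card_eq_zero.mp hd
      rw [Finset.eq_empty_iff_forall_notMem] at h0
      exact h0 S (Finset.mem_filter.mpr ⟨Finset.mem_univ _, hj, hS, hc⟩)
    · rwa [Finset.erase_eq_of_notMem hj]
  · exact winning_mono (Finset.erase_subset _ _)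

lemma dummy_winning_insert {q : ℕ} {w : α → ℕ} {j : α} (hd : eta q w j = 0)
    (S : Finset α) : winning q w (insert j S) ↔ winning q w S := by
  rw [dummy_winning_erase hd (insert j S), Finset.erase_insert_eq_erase,
    ← dummy_winning_erase hd S]

/-- flipping `j`'s membership preserves criticality of `x ≠ j`. -/
lemma flip_crit {q : ℕ} {w : α → ℕ} {j x : α} (hd : eta q w j = 0)
    (hx : x ≠ j) (S : Finset α)
    (h : x ∈ S ∧ winning q w S ∧ ¬ winning q w (S.erase x)) :
    x ∈ (if j ∈ S then S.erase j else insert j S)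
      ∧ winning q w (if j ∈ S then S.erase j else insert j S)
      ∧ ¬ winning q w ((if j ∈ S then S.erase j else insert j S).erase x) := by
  obtain ⟨hxS, hwin, hnw⟩ := h
  by_cases hj : j ∈ S
  · rw [if_pos hj]
    refine ⟨Finset.mem_erase.mpr ⟨hx, hxS⟩, (dummy_winning_erase hd S).mp hwin, ?_⟩
    rw [Finset.erase_right_comm]
    exact fun hw => hnw ((dummy_winning_erase hd _).mpr hw)
  · rw [if_neg hj]
    refine ⟨Finset.mem_insert_of_mem hxS, (dummy_winning_insert hd S).mpr hwin, ?_⟩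
    rw [Finset.erase_insert_of_ne (Ne.symm hx), dummy_winning_insert hd]
    exact hnw

/-- Pairing coalitions with their `j`-flips: the Banzhaf count of `x` is
twice the number of its critical coalitions satisfying `i ∈ S ↔ j ∈ S`. -/
lemma eta_eq_two_mul {q : ℕ} {w : α → ℕ} {i j : α} (hij : i ≠ j)
    (hd : eta q w j = 0) (x : α) (hx : x ≠ j) :
    eta q w x = 2 * (Finset.univ.filter fun S : Finset α =>
      (x ∈ S ∧ winning q w S ∧ ¬ winning q w (S.erase x)) ∧ (i ∈ S ↔ j ∈ S)).card := by
  classical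
  have hsplit :
      ((Finset.univ.filter fun S : Finset α =>
          x ∈ S ∧ winning q w S ∧ ¬ winning q w (S.erase x)).filter
            fun S => i ∈ S ↔ j ∈ S).card
      + ((Finset.univ.filter fun S : Finset α =>
          x ∈ S ∧ winning q w S ∧ ¬ winning q w (S.erase x)).filter
            fun S => ¬ (i ∈ S ↔ j ∈ S)).card
      = eta q w x :=
    Finset.card_filter_add_card_filter_not _
  have hbij :
      ((Finset.univ.filter fun S : Finset α =>
          x ∈ S ∧ winning q w S ∧ ¬ winning q w (S.erase x)).filter
            fun S => ¬ (i ∈ S ↔ j ∈ S)).card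
      = ((Finset.univ.filter fun S : Finset α =>
          x ∈ S ∧ winning q w S ∧ ¬ winning q w (S.erase x)).filter
            fun S => i ∈ S ↔ j ∈ S).card := by
    refine Finset.card_bij' (fun S _ => if j ∈ S then S.erase j else insert j S)
      (fun S _ => if j ∈ S then S.erase j else insert j S) ?_ ?_ ?_ ?_
    · intro S hS
      beta_reduce
      rw [Finset.mem_filter, Finset.mem_filter] at hS
      obtain ⟨⟨-, hcrit⟩, hP⟩ := hS
      refine Finset.mem_filter.mpr ⟨Finset.mem_filter.mpr
        ⟨Finset.mem_univ _, flip_crit hd hx S hcrit⟩, ?_⟩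
      by_cases hj : j ∈ S
      · rw [if_pos hj]
        have hiS : i ∉ S := fun hi => hP ⟨fun _ => hj, fun _ => hi⟩
        simp [Finset.mem_erase, hiS]
      · rw [if_neg hj]
        have hiS : i ∈ S := by
          by_contra hi
          exact hP ⟨fun h => absurd h hi, fun h => absurd h hj⟩
        simp [Finset.mem_insert, hiS]
    · intro S hS
      beta_reduce
      rw [Finset.mem_filter, Finset.mem_filter] at hS
      obtain ⟨⟨-, hcrit⟩, hP⟩ := hS
      refine Finset.mem_filter.mpr ⟨Finset.mem_filter.mpr
        ⟨Finset.mem_univ _, flip_crit hd hx S hcrit⟩, ?_⟩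
      by_cases hj : j ∈ S
      · rw [if_pos hj]
        have hiS : i ∈ S := hP.mpr hj
        intro hP'
        have hjn : j ∉ S.erase j := Finset.notMem_erase _ _
        have : i ∈ S.erase j := Finset.mem_erase.mpr ⟨hij, hiS⟩
        exact hjn (hP'.mp this)
      · rw [if_neg hj]
        have hiS : i ∉ S := fun h => hj (hP.mp h)
        intro hP'
        have hji : j ∈ insert j S := Finset.mem_insert_self _ _
        have : i ∈ insert j S := hP'.mpr hji
        rcases Finset.mem_insert.mp this with h | h
        · exact hij h
        · exact hiS h
    · intro S hS
      beta_reduce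
      rw [Finset.mem_filter] at hS
      by_cases hj : j ∈ S
      · rw [if_pos hj, if_neg (Finset.notMem_erase _ _), Finset.insert_erase hj]
      · rw [if_neg hj, if_pos (Finset.mem_insert_self _ _), Finset.erase_insert hj]
    · intro S hS
      beta_reduce
      rw [Finset.mem_filter] at hS
      by_cases hj : j ∈ S
      · rw [if_pos hj, if_neg (Finset.notMem_erase _ _), Finset.insert_erase hj]
      · rw [if_neg hj, if_pos (Finset.mem_insert_self _ _), Finset.erase_insert hj]
  rw [← Finset.filter_filter]
  omega


/-- Bijection between critical coalitions of the merged game and critical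
coalitions of the original game satisfying `i ∈ S ↔ j ∈ S`. -/
lemma eta'_eq {q : ℕ} {w : α → ℕ} {i j : α} (hij : i ≠ j) (hd : eta q w j = 0)
    (w' : {x : α // x ≠ j} → ℕ)
    (hw' : w' = fun x : {x : α // x ≠ j} => if x.1 = i then w i + w j else w x.1)
    (x : α) (hx : x ≠ j) :
    eta q w' ⟨x, hx⟩ = (Finset.univ.filter fun S : Finset α =>
      (x ∈ S ∧ winning q w S ∧ ¬ winning q w (S.erase x)) ∧ (i ∈ S ↔ j ∈ S)).card := by
  classical
  set ii : {y : α // y ≠ j} := ⟨i, hij⟩ with hii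
  set x' : {y : α // y ≠ j} := ⟨x, hx⟩ with hx'
  set Φ : Finset {y : α // y ≠ j} → Finset α :=
    fun T => T.image Subtype.val ∪ (if ii ∈ T then {j} else ∅) with hΦ
  have hmem : ∀ (T : Finset {y : α // y ≠ j}) (s : α) (hs : s ≠ j),
      s ∈ Φ T ↔ ⟨s, hs⟩ ∈ T := by
    intro T s hs
    simp only [hΦ, Finset.mem_union, Finset.mem_image]
    constructor
    · rintro (⟨t, ht, rfl⟩ | h)
      · simpa using ht
      · exfalso
        by_cases hiT : ii ∈ T
        · rw [if_pos hiT] at h; exact hs (Finset.mem_singleton.mp h)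
        · rw [if_neg hiT] at h; exact absurd h (Finset.notMem_empty _)
    · intro h; exact Or.inl ⟨⟨s, hs⟩, h, rfl⟩
  have hmemj : ∀ T : Finset {y : α // y ≠ j}, j ∈ Φ T ↔ ii ∈ T := by
    intro T
    simp only [hΦ, Finset.mem_union, Finset.mem_image]
    constructor
    · rintro (⟨t, ht, h⟩ | h)
      · exact absurd h t.2
      · by_cases hiT : ii ∈ T
        · exact hiT
        · rw [if_neg hiT] at h; exact absurd h (Finset.notMem_empty _)
    · intro h; rw [if_pos h]; exact Or.inr (Finset.mem_singleton_self _)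
  have hjim : ∀ T : Finset {y : α // y ≠ j}, j ∉ T.image Subtype.val := by
    intro T h
    obtain ⟨t, -, h⟩ := Finset.mem_image.mp h
    exact t.2 h
  have hsum : ∀ T : Finset {y : α // y ≠ j}, ∑ s ∈ Φ T, w s = ∑ t ∈ T, w' t := by
    intro T
    have hpt : ∀ t : {y : α // y ≠ j}, w' t = w t.1 + (if t = ii then w j else 0) := by
      intro t
      simp only [hw']
      by_cases h : t.1 = i
      · rw [if_pos h, if_pos (Subtype.ext h), h]
      · rw [if_neg h, if_neg (fun he => h (congrArg Subtype.val he)), add_zero]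
    have himg : ∑ s ∈ T.image Subtype.val, w s = ∑ t ∈ T, w t.1 :=
      Finset.sum_image (fun a _ b _ h => Subtype.ext h)
    rw [Finset.sum_congr rfl fun t _ => hpt t, Finset.sum_add_distrib,
      Finset.sum_ite_eq' T ii fun _ => w j]
    simp only [hΦ]
    by_cases hiT : ii ∈ T
    · rw [if_pos hiT, if_pos hiT,
        Finset.sum_union (Finset.disjoint_singleton_right.mpr (hjim T)),
        Finset.sum_singleton, himg]
    · rw [if_neg hiT, if_neg hiT, Finset.union_empty, himg, add_zero]
  have hwin : ∀ T, winning q w (Φ T) ↔ winning q w' T := by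
    intro T; unfold winning; rw [hsum T]
  have himgerase : ∀ T : Finset {y : α // y ≠ j},
      (T.erase x').image Subtype.val = (T.image Subtype.val).erase x :=
    fun T => Finset.image_erase Subtype.val_injective T x'
  have hwe : ∀ T : Finset {y : α // y ≠ j},
      winning q w ((Φ T).erase x) ↔ winning q w' (T.erase x') := by
    intro T
    rw [← hwin (T.erase x')]
    by_cases hxi : x = i
    · have hxe : x' = ii := Subtype.ext hxi
      have hΦe : Φ (T.erase x') = (T.image Subtype.val).erase x := by
        have hni : ii ∉ T.erase x' := by rw [hxe]; exact Finset.notMem_erase _ _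
        simp only [hΦ, if_neg hni, Finset.union_empty, himgerase T]
      rw [hΦe]
      by_cases hiT : ii ∈ T
      · have heq : (Φ T).erase x = insert j ((T.image Subtype.val).erase x) := by
          simp only [hΦ, if_pos hiT, Finset.union_comm, ← Finset.insert_eq]
          exact Finset.erase_insert_of_ne (Ne.symm hx)
        rw [heq, dummy_winning_insert hd]
      · have heq : (Φ T).erase x = ((T.image Subtype.val).erase x) := by
          simp only [hΦ, if_neg hiT, Finset.union_empty]
        rw [heq]
    · have hxii : x' ≠ ii := fun he => hxi (congrArg Subtype.val he)
      have h1 : ii ∈ T.erase x' ↔ ii ∈ T := by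
        simp [Finset.mem_erase, hxii.symm]
      have hΦe : Φ (T.erase x') = (Φ T).erase x := by
        simp only [hΦ, himgerase T, Finset.erase_union_distrib]
        by_cases hiT : ii ∈ T
        · have h2 : ii ∈ T.erase x' := Finset.mem_erase.mpr ⟨Ne.symm hxii, hiT⟩
          rw [if_pos hiT, if_pos h2,
            Finset.erase_eq_of_notMem (fun h => hx (Finset.mem_singleton.mp h))]
        · have h2 : ii ∉ T.erase x' := fun h => hiT (Finset.mem_erase.mp h).2
          rw [if_neg hiT, if_neg h2, Finset.erase_empty]
      rw [hΦe]
  have hΨΦ : ∀ T : Finset {y : α // y ≠ j}, (Φ T).subtype (fun s => s ≠ j) = T := by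
    intro T
    ext t
    rw [Finset.mem_subtype]
    exact (hmem T t.1 t.2).trans (by rw [Subtype.coe_eta])
  have hΦΨ : ∀ S : Finset α, (i ∈ S ↔ j ∈ S) → Φ (S.subtype (fun s => s ≠ j)) = S := by
    intro S hP
    ext s
    by_cases hs : s = j
    · rw [hs, hmemj, Finset.mem_subtype]
      exact hP
    · rw [hmem _ s hs, Finset.mem_subtype]
  have heta : eta q w' x' = (Finset.univ.filter fun T : Finset {y : α // y ≠ j} =>
      x' ∈ T ∧ winning q w' T ∧ ¬ winning q w' (T.erase x')).card := rfl
  rw [heta]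
  refine Finset.card_bij' (fun T _ => Φ T) (fun S _ => S.subtype (fun s => s ≠ j))
    ?_ ?_ ?_ ?_
  · intro T hT
    beta_reduce
    obtain ⟨-, h1, h2, h3⟩ := Finset.mem_filter.mp hT
    refine Finset.mem_filter.mpr ⟨Finset.mem_univ _, ⟨?_, ?_, ?_⟩, ?_⟩
    · exact (hmem T x hx).mpr h1
    · exact (hwin T).mpr h2
    · exact fun h => h3 ((hwe T).mp h)
    · rw [hmem T i hij, hmemj T]
  · intro S hS
    beta_reduce
    obtain ⟨-, ⟨h1, h2, h3⟩, hP⟩ := Finset.mem_filter.mp hS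
    have hfs := hΦΨ S hP
    refine Finset.mem_filter.mpr ⟨Finset.mem_univ _, ?_, ?_, ?_⟩
    · rw [Finset.mem_subtype]; exact h1
    · rw [← hwin _, hfs]; exact h2
    · rw [← hwe _, hfs]; exact h3
  · intro T _
    exact hΨΦ T
  · intro S hS
    obtain ⟨-, -, hP⟩ := Finset.mem_filter.mp hS
    exact hΦΨ S hP

end Aux

/-- If player `i` annexes a dummy player `j` (one with `η_j = 0`), then the
Banzhaf index of every remaining player in the new game equals its Banzhaf
index in the original game; in particular the merged player's Banzhaf index
equals `β_i(v)`. -/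
theorem annex_dummy_banzhaf_unchanged
    (α : Type*) [Fintype α] [DecidableEq α]
    (q : ℕ) (w : α → ℕ) (i j : α) (hij : i ≠ j)
    (hdummy : eta q w j = 0) (htot : 0 < totalEta q w)
    (w' : {x : α // x ≠ j} → ℕ)
    (hw' : w' = fun x : {x : α // x ≠ j} => if x.1 = i then w i + w j else w x.1) :
    (∀ (x : α) (hx : x ≠ j), x ≠ i → banzhaf q w' ⟨x, hx⟩ = banzhaf q w x) ∧
    banzhaf q w' ⟨i, hij⟩ = banzhaf q w i := by
  classical
  have h2 : ∀ (y : α) (hy : y ≠ j), eta q w y = 2 * eta q w' ⟨y, hy⟩ := by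
    intro y hy
    rw [eta'_eq hij hdummy w' hw' y hy, eta_eq_two_mul hij hdummy y hy]
  have htot2 : totalEta q w = 2 * totalEta q w' := by
    unfold totalEta
    have h0 : ∑ y : α, eta q w y = ∑ y ∈ Finset.univ.erase j, eta q w y := by
      rw [← Finset.sum_erase_add _ _ (Finset.mem_univ j), hdummy, add_zero]
    rw [h0, Finset.sum_subtype (p := fun y : α => y ≠ j) _ (fun y => by simp) (eta q w),
      Finset.mul_sum]
    apply Finset.sum_congr rfl
    intro t _
    rw [h2 t.1 t.2, Subtype.coe_eta]
  have key : ∀ (x : α) (hx : x ≠ j), banzhaf q w' ⟨x, hx⟩ = banzhaf q w x := by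
    intro x hx
    unfold banzhaf
    rw [h2 x hx, htot2]
    push_cast
    rw [mul_div_mul_left _ _ (two_ne_zero)]
  exact ⟨fun x hx _ => key x hx, key i hij⟩
end

section
/- Let A = {a_1,...,a_k} be positive integers and consider the WVG v = [q; 8a_1,...,8a_k, 2] with quota q = 4·Σa_i + 2. If no subset of A sums to (Σa_i)/2 (i.e., A is a 'no' instance of PARTITION), then the last player (weight 2) is a dummy in v, and if that player splits into two players of weight 1 each, both sub-players are dummies in the resulting game. -/
open scoped Classical

lemma sum_elim_split {α β : Type*} [DecidableEq α] [DecidableEq β]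
    (f : α → ℕ) (g : β → ℕ) (S : Finset (α ⊕ β)) :
    ∑ j ∈ S, Sum.elim f g j = ∑ i ∈ S.toLeft, f i + ∑ i ∈ S.toRight, g i := by
  conv_lhs => rw [← Finset.toLeft_disjSum_toRight (u := S)]
  rw [Finset.sum_disjSum]
  rfl

lemma toLeft_erase_inr {α β : Type*} [DecidableEq α] [DecidableEq β]
    (S : Finset (α ⊕ β)) (b : β) : (S.erase (Sum.inr b)).toLeft = S.toLeft := by
  ext x; simp

lemma toRight_erase_inr {α β : Type*} [DecidableEq α] [DecidableEq β]
    (S : Finset (α ⊕ β)) (b : β) : (S.erase (Sum.inr b)).toRight = S.toRight.erase b := by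
  ext x; simp [and_comm]

/-- NO-instance of PARTITION: with weights `8a_1, ..., 8a_k, 2` and quota
`4·Σa_i + 2`, if no subset of `A` sums to half of `Σa_i`, then the weight-2
player is a dummy, and after splitting it into two weight-1 players both
sub-players are dummies. -/
theorem partition_no_instance_dummy (k : ℕ) (a : Fin k → ℕ) (ha : ∀ i, 0 < a i)
    (hno : ∀ P : Finset (Fin k), 2 * ∑ i ∈ P, a i ≠ ∑ i, a i)
    (q : ℕ) (hq : q = 4 * ∑ i, a i + 2)
    (w : Fin k ⊕ Unit → ℕ)
    (hw : w = Sum.elim (fun i => 8 * a i) (fun _ => 2))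
    (w' : Fin k ⊕ Fin 2 → ℕ)
    (hw' : w' = Sum.elim (fun i => 8 * a i) (fun _ => 1)) :
    eta q w (Sum.inr ()) = 0 ∧ (∀ j : Fin 2, eta q w' (Sum.inr j) = 0) := by
  subst hq hw hw'
  constructor
  · rw [eta, Finset.card_eq_zero, Finset.filter_eq_empty_iff]
    rintro S - ⟨hmem, hwin, hlose⟩
    rw [winning, sum_elim_split] at hwin
    rw [winning, sum_elim_split, toLeft_erase_inr, toRight_erase_inr] at hlose
    have hR : S.toRight = {()} := by
      ext x; obtain ⟨⟩ := x
      simp only [Finset.mem_toRight, Finset.mem_singleton, iff_true]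
      exact hmem
    rw [hR] at hwin hlose
    simp only [Finset.erase_singleton, Finset.sum_empty, Finset.sum_singleton, add_zero] at hwin hlose
    have hM : ∑ i ∈ S.toLeft, (8 * a i) = 8 * ∑ i ∈ S.toLeft, a i := by
      rw [Finset.mul_sum]
    rw [hM] at hwin hlose
    have := hno S.toLeft
    omega
  · intro j
    rw [eta, Finset.card_eq_zero, Finset.filter_eq_empty_iff]
    rintro S - ⟨hmem, hwin, hlose⟩
    rw [winning, sum_elim_split] at hwin
    rw [winning, sum_elim_split, toLeft_erase_inr, toRight_erase_inr] at hlose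
    have hjR : j ∈ S.toRight := Finset.mem_toRight.2 hmem
    have hc : 1 ≤ S.toRight.card := Finset.card_pos.2 ⟨j, hjR⟩
    have hc2 : S.toRight.card ≤ 2 := by
      simpa using Finset.card_le_univ S.toRight
    rw [Finset.sum_const, smul_eq_mul, mul_one] at hwin
    rw [Finset.sum_const, smul_eq_mul, mul_one, Finset.card_erase_of_mem hjR] at hlose
    have hM : ∑ i ∈ S.toLeft, (8 * a i) = 8 * ∑ i ∈ S.toLeft, a i := by
      rw [Finset.mul_sum]
    rw [hM] at hwin hlose
    have := hno S.toLeft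
    omega
end
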